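/- arXiv:2509.23064 — 5 statements merged into one kernel-verified Lean document; each statement's English description precedes it below -/
import Mathlib

section
/- Let s > 1 and l ≥ 3. Then the function F_{s,l} is continuously differentiable on ℝ, with F'_{s,l}(t) = s·sign(t)·|t|^{s−1} for |t| ≤ l and F'_{s,l}(t) = sign(t)·(a_{s,l} − b_{s,l}|t|^{−2}) for |t| > l. -/
/-- The auxiliary function `F_{s,l}` of Definition 6.1: `F_{s,l}(t) = |t|^s` for `|t| ≤ l`
and `F_{s,l}(t) = η_{s,l} + a_{s,l}|t| + b_{s,l}|t|⁻¹` for `|t| > l`, where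
`η_{s,l} = (1−s²)l^s`, `a_{s,l} = ½s(s+1)l^{s−1}`, `b_{s,l} = ½s(s−1)l^{s+1}`. -/
noncomputable def Fsl (s l t : ℝ) : ℝ :=
  if |t| ≤ l then |t| ^ s
  else (1 - s ^ 2) * l ^ s + (s * (s + 1) / 2) * l ^ (s - 1) * |t|
    + (s * (s - 1) / 2) * l ^ (s + 1) * |t|⁻¹

/-- The claimed derivative of `F_{s,l}`. -/
noncomputable def gsl (s l t : ℝ) : ℝ :=
  if |t| ≤ l then s * Real.sign t * |t| ^ (s - 1)
  else Real.sign t * ((s * (s + 1) / 2) * l ^ (s - 1)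
          - (s * (s - 1) / 2) * l ^ (s + 1) * (|t| ^ (2 : ℕ))⁻¹)

/-- arithmetic identity: `a - b/l² = s·l^{s-1}`. -/
lemma idA {s l : ℝ} (hs : 1 < s) (hl : 3 ≤ l) :
    (s * (s + 1) / 2) * l ^ (s - 1) - (s * (s - 1) / 2) * l ^ (s + 1) * ((l:ℝ) ^ (2:ℕ))⁻¹
      = s * l ^ (s - 1) := by
  have h0 : (0:ℝ) < l := by linarith
  have h1 : l ^ (s + 1) = l ^ (s - 1) * l ^ (2:ℕ) := by
    rw [← Real.rpow_natCast l 2, ← Real.rpow_add h0]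
    congr 1; ring
  rw [h1]
  have h2 : (l:ℝ) ^ (2:ℕ) ≠ 0 := by positivity
  field_simp
  ring

/-- value match at the junction: `η + a·l + b·l⁻¹ = l^s`. -/
lemma idV {s l : ℝ} (hs : 1 < s) (hl : 3 ≤ l) :
    (1 - s ^ 2) * l ^ s + (s * (s + 1) / 2) * l ^ (s - 1) * l
      + (s * (s - 1) / 2) * l ^ (s + 1) * l⁻¹ = l ^ s := by
  have h0 : (0:ℝ) < l := by linarith
  have h1 : l ^ (s - 1) * l = l ^ s := by
    rw [Real.rpow_sub_one h0.ne' s]; field_simp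
  have h2 : l ^ (s + 1) * l⁻¹ = l ^ s := by
    rw [Real.rpow_add_one h0.ne' s]; field_simp
  rw [mul_assoc, h1, mul_assoc, h2]
  ring

/-- the outer branch function -/
noncomputable def hsl (s l t : ℝ) : ℝ :=
  (1 - s ^ 2) * l ^ s + (s * (s + 1) / 2) * l ^ (s - 1) * t
    + (s * (s - 1) / 2) * l ^ (s + 1) * t⁻¹

lemma hsl_hasDerivAt {s l t : ℝ} (ht : t ≠ 0) :
    HasDerivAt (hsl s l)
      ((s * (s + 1) / 2) * l ^ (s - 1) - (s * (s - 1) / 2) * l ^ (s + 1) * ((t:ℝ) ^ (2:ℕ))⁻¹) t := by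
  have h1 : HasDerivAt (fun t : ℝ => (1 - s ^ 2) * l ^ s
      + (s * (s + 1) / 2) * l ^ (s - 1) * t + (s * (s - 1) / 2) * l ^ (s + 1) * t⁻¹)
      (0 + (s * (s + 1) / 2) * l ^ (s - 1) * 1 + (s * (s - 1) / 2) * l ^ (s + 1) * (-(t ^ 2)⁻¹)) t := by
    exact (((hasDerivAt_const t _).add ((hasDerivAt_id t).const_mul _)).add
      ((hasDerivAt_inv ht).const_mul _))
  convert h1 using 1
  · rfl
  ring

lemma key_nonneg {s l : ℝ} (hs : 1 < s) (hl : 3 ≤ l) {t : ℝ} (ht : 0 ≤ t) :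
    HasDerivAt (Fsl s l) (gsl s l t) t := by
  have h0 : (0:ℝ) < l := by linarith
  rcases eq_or_lt_of_le ht with rfl | htpos
  · -- t = 0
    have hg : gsl s l 0 = 0 := by simp [gsl, h0.le]
    rw [hg, hasDerivAt_iff_tendsto_slope]
    have hb : ∀ᶠ y in nhdsWithin (0:ℝ) {(0:ℝ)}ᶜ, ‖slope (Fsl s l) 0 y‖ ≤ |y| ^ (s - 1) := by
      filter_upwards [self_mem_nhdsWithin,
        eventually_nhdsWithin_of_eventually_nhds
          (eventually_abs_sub_lt 0 h0)] with y hy hyl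
      have hy0 : y ≠ 0 := hy
      have hyl' : |y| ≤ l := by simpa using hyl.le
      have hF : Fsl s l y = |y| ^ s := by simp [Fsl, hyl']
      have hF0 : Fsl s l 0 = 0 := by
        simp [Fsl, h0.le, Real.zero_rpow (by linarith : s ≠ 0)]
      rw [slope_def_field, hF, hF0, Real.norm_eq_abs, sub_zero, sub_zero, abs_div,
        abs_of_nonneg (Real.rpow_nonneg (abs_nonneg y) s),
        Real.rpow_sub_one (abs_ne_zero.2 hy0)]
    refine squeeze_zero_norm' hb ?_
    have h1 : Filter.Tendsto (fun y : ℝ => |y|) (nhds (0:ℝ)) (nhds 0) := by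
      simpa using continuous_abs.tendsto (0:ℝ)
    have h2 := (Real.continuousAt_rpow_const 0 (s-1) (Or.inr (by linarith))).tendsto
    rw [Real.zero_rpow (by linarith : s - 1 ≠ 0)] at h2
    exact (h2.comp h1).mono_left nhdsWithin_le_nhds
  · rcases lt_trichotomy t l with htl | heq | htl
    · -- 0 < t < l
      have heq : Fsl s l =ᶠ[nhds t] fun y => y ^ s := by
        filter_upwards [Ioo_mem_nhds htpos htl] with y hy
        have : |y| = y := abs_of_pos hy.1
        simp [Fsl, this, hy.2.le]
      have hd := Real.hasDerivAt_rpow_const (p := s) (Or.inl htpos.ne')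
      have := hd.congr_of_eventuallyEq heq
      have hg : gsl s l t = s * t ^ (s - 1) := by
        simp [gsl, abs_of_pos htpos, htl.le, Real.sign_of_pos htpos]
      rwa [hg]
    · -- t = l
      rw [heq]
      have hd1 : HasDerivWithinAt (Fsl s l) (s * l ^ (s - 1)) (Set.Icc 0 l) l := by
        have hd := (Real.hasDerivAt_rpow_const (p := s) (Or.inl h0.ne')).hasDerivWithinAt
          (s := Set.Icc 0 l)
        refine hd.congr (fun y hy => ?_) ?_
        · have : |y| = y := abs_of_nonneg hy.1
          simp [Fsl, this, hy.2]
        · simp [Fsl, abs_of_pos h0, le_refl]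
      have hd2 : HasDerivWithinAt (Fsl s l) (s * l ^ (s - 1)) (Set.Ici l) l := by
        have hd := ((hsl_hasDerivAt (s := s) (l := l) h0.ne').hasDerivWithinAt
          (s := Set.Ici l))
        rw [idA hs hl] at hd
        refine hd.congr (fun y hy => ?_) ?_
        · rcases eq_or_lt_of_le (Set.mem_Ici.1 hy) with rfl | hyl
          · simp only [Fsl, hsl, abs_of_pos h0, le_refl, if_pos]
            rw [idV hs hl]
          · have hy0 : 0 < y := lt_trans h0 hyl
            simp only [Fsl, hsl, abs_of_pos hy0, if_neg (not_le.2 hyl)]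
        · simp only [Fsl, hsl, abs_of_pos h0, le_refl, if_pos]
          rw [idV hs hl]
      have := (hd1.union hd2).hasDerivAt (by
        rw [Set.Icc_union_Ici_eq_Ici h0.le]
        exact Ici_mem_nhds h0)
      have hg : gsl s l l = s * l ^ (s - 1) := by
        simp [gsl, abs_of_pos h0, le_refl, Real.sign_of_pos h0]
      rwa [hg]
    · -- t > l
      have ht0 : (0:ℝ) < t := lt_trans h0 htl
      have heq : Fsl s l =ᶠ[nhds t] hsl s l := by
        filter_upwards [Ioi_mem_nhds htl] with y hy
        have hy0 : 0 < y := lt_trans h0 hy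
        simp only [Fsl, hsl, abs_of_pos hy0, if_neg (not_le.2 (Set.mem_Ioi.1 hy))]
      have hd := (hsl_hasDerivAt (s := s) (l := l) ht0.ne').congr_of_eventuallyEq heq
      have hg : gsl s l t = (s * (s + 1) / 2) * l ^ (s - 1)
          - (s * (s - 1) / 2) * l ^ (s + 1) * ((t:ℝ) ^ (2:ℕ))⁻¹ := by
        simp [gsl, abs_of_pos ht0, not_le.2 htl, Real.sign_of_pos ht0]
      rwa [hg]

lemma key {s l : ℝ} (hs : 1 < s) (hl : 3 ≤ l) (t : ℝ) :
    HasDerivAt (Fsl s l) (gsl s l t) t := by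
  rcases le_or_gt 0 t with h | h
  · exact key_nonneg hs hl h
  · have h' := key_nonneg hs hl (neg_nonneg.2 h.le)
    have hcomp : HasDerivAt (Fsl s l ∘ (fun y : ℝ => -y)) (gsl s l (-t) * (-1)) t := by
      refine HasDerivAt.comp t ?_ (hasDerivAt_neg t)
      exact h'
    have heven : (Fsl s l ∘ (fun y : ℝ => -y)) = Fsl s l := by
      funext x
      simp [Function.comp, Fsl, abs_neg]
    rw [heven] at hcomp
    have hodd : gsl s l (-t) = - gsl s l t := by
      simp only [gsl, abs_neg, Real.sign_neg]
      split_ifs <;> ring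
    rw [hodd] at hcomp
    simpa using hcomp

lemma abs_sign_le_one (y : ℝ) : |Real.sign y| ≤ 1 := by
  rcases lt_trichotomy y 0 with h | rfl | h
  · simp [Real.sign_of_neg h]
  · simp [Real.sign_zero]
  · simp [Real.sign_of_pos h]

lemma f1_cont {s : ℝ} (hs : 1 < s) :
    Continuous (fun t : ℝ => s * Real.sign t * |t| ^ (s - 1)) := by
  refine continuous_iff_continuousAt.2 fun t => ?_
  have habs : ∀ u : ℝ, u ≠ 0 → ContinuousAt (fun y : ℝ => |y| ^ (s - 1)) u := by
    intro u hu
    exact (Real.continuousAt_rpow_const |u| (s - 1) (Or.inl (abs_ne_zero.2 hu))).comp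
      continuous_abs.continuousAt
  rcases lt_trichotomy t 0 with h | rfl | h
  · have hc : ContinuousAt (fun y : ℝ => (s * -1) * |y| ^ (s - 1)) t :=
      continuousAt_const.mul (habs t h.ne)
    refine hc.congr ?_
    filter_upwards [Iio_mem_nhds h] with y hy
    rw [Real.sign_of_neg hy]
  · have h1 : Filter.Tendsto (fun y : ℝ => |y|) (nhds (0:ℝ)) (nhds 0) := by
      simpa using continuous_abs.tendsto (0:ℝ)
    have h2 := (Real.continuousAt_rpow_const 0 (s-1) (Or.inr (by linarith))).tendsto
    rw [Real.zero_rpow (by linarith : s - 1 ≠ 0)] at h2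
    have h3 : Filter.Tendsto (fun y : ℝ => |s| * |y| ^ (s - 1)) (nhds (0:ℝ)) (nhds 0) := by
      simpa using (h2.comp h1).const_mul |s|
    have h4 : Filter.Tendsto (fun y : ℝ => s * Real.sign y * |y| ^ (s - 1))
        (nhds (0:ℝ)) (nhds 0) := by
      refine squeeze_zero_norm (fun y => ?_) h3
      rw [Real.norm_eq_abs, abs_mul, abs_mul,
        abs_of_nonneg (Real.rpow_nonneg (abs_nonneg y) (s-1))]
      have hnn : (0:ℝ) ≤ |y| ^ (s - 1) := Real.rpow_nonneg (abs_nonneg y) _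
      have h5 := mul_le_mul_of_nonneg_right
        (mul_le_mul_of_nonneg_left (abs_sign_le_one y) (abs_nonneg s)) hnn
      simpa using h5
    rw [ContinuousAt, show s * Real.sign (0:ℝ) * |(0:ℝ)| ^ (s - 1) = 0 by simp]
    exact h4
  · have hc : ContinuousAt (fun y : ℝ => (s * 1) * |y| ^ (s - 1)) t :=
      continuousAt_const.mul (habs t h.ne')
    refine hc.congr ?_
    filter_upwards [Ioi_mem_nhds h] with y hy
    rw [Real.sign_of_pos hy]

/-- A continuous representative agreeing with the outer branch of `gsl` off `|t| ≤ l`. -/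
noncomputable def f2 (s l t : ℝ) : ℝ :=
  (max (-1) (min 1 t)) * ((s * (s + 1) / 2) * l ^ (s - 1)
    - (s * (s - 1) / 2) * l ^ (s + 1) * ((max |t| l) ^ (2 : ℕ))⁻¹)

lemma f2_cont {s l : ℝ} (hl : 3 ≤ l) : Continuous (f2 s l) := by
  have h0 : (0:ℝ) < l := by linarith
  have hne : ∀ x : ℝ, (max |x| l) ^ (2:ℕ) ≠ 0 := by
    intro x
    have : (0:ℝ) < max |x| l := lt_of_lt_of_le h0 (le_max_right _ _)
    positivity
  exact (continuous_const.max (continuous_const.min continuous_id)).mul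
    (continuous_const.sub (continuous_const.mul
      (((continuous_abs.max continuous_const).pow 2).inv₀ hne)))

lemma clamp_eq_sign {t : ℝ} (ht : 1 ≤ |t|) : max (-1) (min 1 t) = Real.sign t := by
  rcases le_or_gt 1 t with h | h
  · rw [min_eq_left h, max_eq_right (by linarith : (-1:ℝ) ≤ 1),
      Real.sign_of_pos (by linarith : (0:ℝ) < t)]
  · have ht' : t ≤ -1 := by
      rcases abs_cases t with ⟨he, _⟩ | ⟨he, _⟩
      · linarith [he ▸ ht]
      · linarith [he ▸ ht]
    rw [min_eq_right (by linarith : t ≤ 1), max_eq_left ht',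
      Real.sign_of_neg (by linarith : t < 0)]

lemma gsl_cont {s l : ℝ} (hs : 1 < s) (hl : 3 ≤ l) : Continuous (gsl s l) := by
  have h0 : (0:ℝ) < l := by linarith
  have hrepr : gsl s l = fun t => if |t| ≤ l then s * Real.sign t * |t| ^ (s - 1)
      else f2 s l t := by
    funext t
    by_cases h : |t| ≤ l
    · simp [gsl, h]
    · push_neg at h
      have h1 : (1:ℝ) ≤ |t| := by linarith
      simp only [gsl, if_neg (not_le.2 h), f2, clamp_eq_sign h1, max_eq_left h.le]
  rw [hrepr]
  refine Continuous.if_le (f1_cont hs) (f2_cont hl) continuous_abs continuous_const ?_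
  intro x hx
  have h1 : (1:ℝ) ≤ |x| := by rw [hx]; linarith
  rw [f2, clamp_eq_sign h1, hx, max_self, idA hs hl]
  ring

/-- For `s > 1` and `l ≥ 3`, `F_{s,l}` is continuously differentiable, with
`F'_{s,l}(t) = s · sign t · |t|^{s−1}` for `|t| ≤ l`, and
`F'_{s,l}(t) = sign t · (a_{s,l} − b_{s,l} |t|^{−2})` for `|t| > l`. -/
theorem stmt_5 (s l : ℝ) (hs : 1 < s) (hl : 3 ≤ l) :
    ContDiff ℝ 1 (Fsl s l) ∧
    (∀ t : ℝ, |t| ≤ l →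
      deriv (Fsl s l) t = s * Real.sign t * |t| ^ (s - 1)) ∧
    (∀ t : ℝ, l < |t| →
      deriv (Fsl s l) t =
        Real.sign t * ((s * (s + 1) / 2) * l ^ (s - 1)
          - (s * (s - 1) / 2) * l ^ (s + 1) * (|t| ^ (2 : ℕ))⁻¹)) := by
  have hderiv : deriv (Fsl s l) = gsl s l := funext fun t => (key hs hl t).deriv
  refine ⟨?_, ?_, ?_⟩
  · rw [contDiff_one_iff_deriv]
    exact ⟨fun t => (key hs hl t).differentiableAt, hderiv ▸ gsl_cont hs hl⟩
  · intro t ht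
    rw [hderiv]
    simp [gsl, ht]
  · intro t ht
    rw [hderiv]
    simp [gsl, not_le.2 ht]
end

section
/- Let s > 1 and l ≥ 3, and let G_{s,l} = F_{s,l}·F'_{s,l}. Then G_{s,l} is continuously differentiable on ℝ, and G'_{s,l} is bounded and uniformly continuous on ℝ; moreover F'_{s,l} is bounded and uniformly continuous on ℝ. -/
open Filter Topology Asymptotics Set Real

noncomputable section StmtSixAux

/-- coefficient `a_{s,l}` -/
def Asl (s l : ℝ) : ℝ := s * (s + 1) / 2 * l ^ (s - 1)

/-- coefficient `b_{s,l}` -/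
def Bsl (s l : ℝ) : ℝ := s * (s - 1) / 2 * l ^ (s + 1)

/-- coefficient `η_{s,l}` -/
def Esl (s l : ℝ) : ℝ := (1 - s ^ 2) * l ^ s

/-- the outer expression of `F_{s,l}` -/
def hF (s l t : ℝ) : ℝ := Esl s l + Asl s l * |t| + Bsl s l * |t|⁻¹

/-- the derivative of the outer expression -/
def hF1 (s l t : ℝ) : ℝ := Real.sign t * (Asl s l - Bsl s l * (t ^ 2)⁻¹)

/-- the second derivative of the outer expression -/
def hF2 (s l t : ℝ) : ℝ := 2 * Bsl s l * (|t| * t ^ 2)⁻¹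

/-- the full derivative of `F_{s,l}` -/
def F1 (s l t : ℝ) : ℝ := if |t| ≤ l then s * (t * |t| ^ (s - 2)) else hF1 s l t

/-- the full derivative of `G_{s,l} = F_{s,l} F'_{s,l}` -/
def G1 (s l t : ℝ) : ℝ :=
  if |t| ≤ l then s * (2 * s - 1) * |t| ^ (2 * s - 2)
  else hF1 s l t ^ 2 + hF s l t * hF2 s l t

/-- the clamp function, a Lipschitz approximation to `sign` -/
def clamp (t : ℝ) : ℝ := max (min t 1) (-1)

section lemmas

variable {s l : ℝ} (hs : 1 < s) (hl : 3 ≤ l)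


lemma littleO_abs_rpow {r : ℝ} (hr : 1 < r) :
    (fun t : ℝ => |t| ^ r) =o[𝓝 0] (fun t : ℝ => t) := by
  rw [isLittleO_iff_tendsto' (by
    filter_upwards with t ht
    simp [ht, Real.zero_rpow (by linarith : r ≠ 0)])]
  apply squeeze_zero_norm (a := fun t : ℝ => |t| ^ (r - 1))
  · intro t
    rcases eq_or_ne t 0 with rfl | ht
    · simp [Real.zero_rpow (by linarith : r - 1 ≠ 0)]
    · have : |t| ^ r / |t| = |t| ^ (r - 1) := (Real.rpow_sub_one (abs_ne_zero.2 ht) r).symm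
      rw [norm_div, Real.norm_eq_abs, Real.norm_eq_abs,
        abs_of_nonneg (Real.rpow_nonneg (abs_nonneg t) r), this]
  · have h0 : ContinuousAt (fun x : ℝ => x ^ (r - 1)) |(0:ℝ)| := by
      rw [abs_zero]; exact Real.continuousAt_rpow_const 0 (r - 1) (Or.inr (by linarith))
    have h2 : Tendsto (fun t : ℝ => |t| ^ (r - 1)) (𝓝 0) (𝓝 (|(0:ℝ)| ^ (r - 1))) :=
      h0.comp continuous_abs.continuousAt
    simpa [Real.zero_rpow (by linarith : r - 1 ≠ 0)] using h2

lemma hd_abs_rpow {p : ℝ} (hp : 1 < p) (t : ℝ) :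
    HasDerivAt (fun u : ℝ => |u| ^ p) (p * (t * |t| ^ (p - 2))) t := by
  rcases lt_trichotomy t 0 with ht | rfl | ht
  · have h1 : HasDerivAt (fun u : ℝ => (-u) ^ p) (p * (-t) ^ (p - 1) * (-1)) t :=
      (Real.hasDerivAt_rpow_const (x := -t) (Or.inl (by linarith))).comp t (hasDerivAt_neg t)
    have h2 : (fun u : ℝ => |u| ^ p) =ᶠ[𝓝 t] fun u : ℝ => (-u) ^ p := by
      filter_upwards [Iio_mem_nhds ht] with u hu
      rw [abs_of_neg hu]
    have h3 : p * (-t) ^ (p - 1) * (-1) = p * (t * |t| ^ (p - 2)) := by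
      have h4 : (-t) ^ (p - 1) = (-t) ^ (1 + (p - 2)) := by ring_nf
      rw [h4, Real.rpow_add (by linarith) 1 (p-2), Real.rpow_one, abs_of_neg ht]
      ring
    exact h3 ▸ (h1.congr_of_eventuallyEq h2)
  · rw [hasDerivAt_iff_isLittleO]
    simp only [abs_zero, Real.zero_rpow (by linarith : p ≠ 0), zero_mul, mul_zero, smul_zero,
      sub_zero]
    exact littleO_abs_rpow hp
  · have h1 : HasDerivAt (fun u : ℝ => u ^ p) (p * t ^ (p - 1)) t :=
      Real.hasDerivAt_rpow_const (Or.inl (ne_of_gt ht))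
    have h2 : (fun u : ℝ => |u| ^ p) =ᶠ[𝓝 t] fun u : ℝ => u ^ p := by
      filter_upwards [Ioi_mem_nhds ht] with u hu
      rw [abs_of_pos hu]
    have h3 : p * t ^ (p - 1) = p * (t * |t| ^ (p - 2)) := by
      have h4 : t ^ (p - 1) = t ^ (1 + (p - 2)) := by ring_nf
      rw [h4, Real.rpow_add ht 1 (p-2), Real.rpow_one, abs_of_pos ht]
    exact h3 ▸ (h1.congr_of_eventuallyEq h2)

lemma hd_mul_abs_rpow {q : ℝ} (hq : 0 < q) (t : ℝ) :
    HasDerivAt (fun u : ℝ => u * |u| ^ q) ((q + 1) * |t| ^ q) t := by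
  rcases lt_trichotomy t 0 with ht | rfl | ht
  · have h1 : HasDerivAt (fun u : ℝ => -((-u) ^ (q + 1)))
        (-((q + 1) * (-t) ^ (q + 1 - 1) * (-1))) t :=
      (((Real.hasDerivAt_rpow_const (x := -t) (Or.inl (by linarith))).comp t
        (hasDerivAt_neg t))).neg
    have h2 : (fun u : ℝ => u * |u| ^ q) =ᶠ[𝓝 t] fun u : ℝ => -((-u) ^ (q + 1)) := by
      filter_upwards [Iio_mem_nhds ht] with u hu
      have hu' : u < 0 := hu
      rw [abs_of_neg hu', Real.rpow_add_one (by linarith : -u ≠ 0) q]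
      ring
    have h3 : -((q + 1) * (-t) ^ (q + 1 - 1) * (-1)) = (q + 1) * |t| ^ q := by
      rw [abs_of_neg ht]
      ring_nf
    exact h3 ▸ (h1.congr_of_eventuallyEq h2)
  · rw [hasDerivAt_iff_isLittleO]
    simp only [abs_zero, Real.zero_rpow (by linarith : q ≠ 0), zero_mul, mul_zero, smul_zero,
      sub_zero]
    rw [← isLittleO_norm_left]
    have he : (fun u : ℝ => ‖u * |u| ^ q‖) = fun u : ℝ => |u| ^ (q + 1) := by
      funext u
      rcases eq_or_ne u 0 with rfl | hu
      · simp [Real.zero_rpow (by linarith : q + 1 ≠ 0)]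
      · rw [Real.norm_eq_abs, abs_mul, abs_of_nonneg (Real.rpow_nonneg (abs_nonneg u) q),
          Real.rpow_add_one (abs_ne_zero.2 hu) q]
        ring
    rw [he]
    exact littleO_abs_rpow (by linarith)
  · have h1 : HasDerivAt (fun u : ℝ => u ^ (q + 1)) ((q + 1) * t ^ (q + 1 - 1)) t :=
      Real.hasDerivAt_rpow_const (Or.inl (ne_of_gt ht))
    have h2 : (fun u : ℝ => u * |u| ^ q) =ᶠ[𝓝 t] fun u : ℝ => u ^ (q + 1) := by
      filter_upwards [Ioi_mem_nhds ht] with u hu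
      have hu' : (0:ℝ) < u := hu
      rw [abs_of_pos hu', Real.rpow_add_one (ne_of_gt hu') q]
      ring
    have h3 : (q + 1) * t ^ (q + 1 - 1) = (q + 1) * |t| ^ q := by
      rw [abs_of_pos ht, add_sub_cancel_right]
    exact h3 ▸ (h1.congr_of_eventuallyEq h2)


lemma Fsl_eq_out {t : ℝ} (ht : ¬ |t| ≤ l) : Fsl s l t = hF s l t := by
  rw [Fsl, if_neg ht]; rfl

lemma Fsl_eq_in {t : ℝ} (ht : |t| ≤ l) : Fsl s l t = |t| ^ s := if_pos ht

lemma hd_hF {t : ℝ} (ht : t ≠ 0) : HasDerivAt (hF s l) (hF1 s l t) t := by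
  rcases ht.lt_or_gt with ht | ht
  · have h1 : HasDerivAt (fun u : ℝ => Esl s l + Asl s l * (-u) + Bsl s l * (-u⁻¹))
        (0 + Asl s l * (-1) + Bsl s l * (-(-(t ^ 2)⁻¹))) t := by
      exact ((hasDerivAt_const t (Esl s l)).add
        (((hasDerivAt_neg t)).const_mul (Asl s l))).add
        (((hasDerivAt_inv ht.ne).neg).const_mul (Bsl s l))
    have h2 : hF s l =ᶠ[𝓝 t] fun u : ℝ => Esl s l + Asl s l * (-u) + Bsl s l * (-u⁻¹) := by
      filter_upwards [Iio_mem_nhds ht] with u hu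
      have hu' : u < 0 := hu
      rw [hF, abs_of_neg hu', inv_neg]
    refine (h1.congr_of_eventuallyEq h2).congr_deriv ?_
    rw [hF1, Real.sign_of_neg ht]
    ring
  · have h1 : HasDerivAt (fun u : ℝ => Esl s l + Asl s l * u + Bsl s l * u⁻¹)
        (0 + Asl s l * 1 + Bsl s l * (-(t ^ 2)⁻¹)) t := by
      exact ((hasDerivAt_const t (Esl s l)).add
        ((hasDerivAt_id t).const_mul (Asl s l))).add
        ((hasDerivAt_inv ht.ne').const_mul (Bsl s l))
    have h2 : hF s l =ᶠ[𝓝 t] fun u : ℝ => Esl s l + Asl s l * u + Bsl s l * u⁻¹ := by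
      filter_upwards [Ioi_mem_nhds ht] with u hu
      have hu' : (0:ℝ) < u := hu
      rw [hF, abs_of_pos hu']
    refine (h1.congr_of_eventuallyEq h2).congr_deriv ?_
    rw [hF1, Real.sign_of_pos ht]
    ring

lemma hd_hF1 {t : ℝ} (ht : t ≠ 0) : HasDerivAt (hF1 s l) (hF2 s l t) t := by
  have hzp : HasDerivAt (fun u : ℝ => (u ^ 2)⁻¹) (-2 * (t ^ 2)⁻¹ * t⁻¹) t := by
    have h := ((hasDerivAt_pow 2 t).inv (pow_ne_zero 2 ht))
    refine h.congr_deriv ?_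
    have ht2 : (t ^ 2) ≠ 0 := pow_ne_zero 2 ht
    field_simp
    ring
  rcases ht.lt_or_gt with ht' | ht'
  · have h1 : HasDerivAt (fun u : ℝ => -(Asl s l - Bsl s l * (u ^ 2)⁻¹))
        (-(0 - Bsl s l * (-2 * (t ^ 2)⁻¹ * t⁻¹))) t :=
      (((hasDerivAt_const t (Asl s l)).sub (hzp.const_mul (Bsl s l)))).neg
    have h2 : hF1 s l =ᶠ[𝓝 t] fun u : ℝ => -(Asl s l - Bsl s l * (u ^ 2)⁻¹) := by
      filter_upwards [Iio_mem_nhds ht'] with u hu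
      have hu' : u < 0 := hu
      rw [hF1, Real.sign_of_neg hu']
      ring
    refine (h1.congr_of_eventuallyEq h2).congr_deriv ?_
    rw [hF2, abs_of_neg ht']
    have ht2 : (t ^ 2) ≠ 0 := pow_ne_zero 2 ht
    field_simp
    ring
  · have h1 : HasDerivAt (fun u : ℝ => Asl s l - Bsl s l * (u ^ 2)⁻¹)
        (0 - Bsl s l * (-2 * (t ^ 2)⁻¹ * t⁻¹)) t :=
      ((hasDerivAt_const t (Asl s l)).sub (hzp.const_mul (Bsl s l)))
    have h2 : hF1 s l =ᶠ[𝓝 t] fun u : ℝ => Asl s l - Bsl s l * (u ^ 2)⁻¹ := by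
      filter_upwards [Ioi_mem_nhds ht'] with u hu
      have hu' : (0:ℝ) < u := hu
      rw [hF1, Real.sign_of_pos hu']
      ring
    refine (h1.congr_of_eventuallyEq h2).congr_deriv ?_
    rw [hF2, abs_of_pos ht']
    have ht2 : (t ^ 2) ≠ 0 := pow_ne_zero 2 ht
    field_simp
    ring


lemma rpow_sm1 (hl0 : 0 < l) : l ^ (s - 1) = l ^ s / l := Real.rpow_sub_one hl0.ne' s

lemma rpow_sp1 (hl0 : 0 < l) : l ^ (s + 1) = l ^ s * l := Real.rpow_add_one hl0.ne' s

lemma rpow_sm2 (hl0 : 0 < l) : l ^ (s - 2) = l ^ s / l ^ 2 := by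
  have h : l ^ (s - 2) = l ^ (s - 1 - 1) := by rw [show s - 2 = s - 1 - 1 by ring]
  rw [h, Real.rpow_sub_one hl0.ne', Real.rpow_sub_one hl0.ne', div_div, ← pow_two]

lemma rpow_2sm2 (hl0 : 0 < l) : l ^ (2 * s - 2) = (l ^ s) ^ 2 / l ^ 2 := by
  rw [show 2 * s - 2 = s + (s - 2) by ring, Real.rpow_add hl0, rpow_sm2 hl0]
  rw [pow_two (l ^ s)]
  ring

lemma match_hF (hl0 : 0 < l) : hF s l l = l ^ s := by
  rw [hF, abs_of_pos hl0, Esl, Asl, Bsl, rpow_sm1 hl0, rpow_sp1 hl0]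
  field_simp
  ring

lemma match_hF1 (hl0 : 0 < l) : Asl s l - Bsl s l * (l ^ 2)⁻¹ = s * (l * l ^ (s - 2)) := by
  rw [Asl, Bsl, rpow_sm1 hl0, rpow_sp1 hl0, rpow_sm2 hl0]
  field_simp
  ring

lemma match_hF2 (hl0 : 0 < l) : 2 * Bsl s l * (l * l ^ 2)⁻¹ = s * (s - 1) * l ^ (s - 2) := by
  rw [Bsl, rpow_sp1 hl0, rpow_sm2 hl0]
  field_simp

lemma match_G1 (hl0 : 0 < l) :
    (Asl s l - Bsl s l * (l ^ 2)⁻¹) ^ 2 + l ^ s * (2 * Bsl s l * (l * l ^ 2)⁻¹)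
      = s * (2 * s - 1) * l ^ (2 * s - 2) := by
  rw [Asl, Bsl, rpow_sm1 hl0, rpow_sp1 hl0, rpow_2sm2 hl0]
  field_simp
  ring

lemma hd_F (hs : 1 < s) (hl : 3 ≤ l) (t : ℝ) : HasDerivAt (Fsl s l) (F1 s l t) t := by
  have hl0 : (0:ℝ) < l := by linarith
  have hll : |l| ≤ l := by rw [abs_of_pos hl0]
  rcases lt_trichotomy |t| l with hlt | heq | hgt
  · have h2 : Fsl s l =ᶠ[𝓝 t] fun u => |u| ^ s := by
      filter_upwards [(isOpen_lt continuous_abs continuous_const).mem_nhds hlt] with u hu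
      exact Fsl_eq_in (le_of_lt hu)
    have h3 := (hd_abs_rpow hs t).congr_of_eventuallyEq h2
    rwa [F1, if_pos hlt.le]
  · rcases (abs_eq hl0.le).1 heq with ht | ht
    · rw [ht]
      have hIic : HasDerivWithinAt (Fsl s l) (F1 s l l) (Iic l) l := by
        have base := (hd_abs_rpow hs l).hasDerivWithinAt (s := Iic l)
        have hev : Fsl s l =ᶠ[𝓝[Iic l] l] fun u => |u| ^ s := by
          filter_upwards [mem_nhdsWithin_of_mem_nhds (Ioi_mem_nhds (by linarith : -l < l)),
            self_mem_nhdsWithin] with u h1 h2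
          exact Fsl_eq_in (abs_le.2 ⟨le_of_lt h1, h2⟩)
        have h4 := base.congr_of_eventuallyEq hev (Fsl_eq_in hll)
        rwa [F1, if_pos hll]
      have hIci : HasDerivWithinAt (Fsl s l) (F1 s l l) (Ici l) l := by
        have base := (hd_hF (s := s) (l := l) (ne_of_gt hl0)).hasDerivWithinAt (s := Ici l)
        have hset : ∀ u ∈ Ici l, Fsl s l u = hF s l u := by
          intro u hu
          rcases eq_or_lt_of_le (mem_Ici.1 hu) with h | h
          · rw [← h, Fsl_eq_in hll, abs_of_pos hl0]
            exact (match_hF hl0).symm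
          · exact Fsl_eq_out (not_le.2 (by rw [abs_of_pos (by linarith)]; exact h))
        have hpt : Fsl s l l = hF s l l := by
          rw [Fsl_eq_in hll, abs_of_pos hl0]
          exact (match_hF hl0).symm
        have hval : F1 s l l = hF1 s l l := by
          rw [F1, if_pos hll, hF1, Real.sign_of_pos hl0, one_mul, match_hF1 hl0,
            abs_of_pos hl0]
        exact hval ▸ (base.congr hset hpt)
      have h5 := hIic.union hIci
      rw [Iic_union_Ici] at h5
      exact hasDerivWithinAt_univ.1 h5
    · rw [ht]
      have hml : |(-l)| ≤ l := by rw [abs_neg, abs_of_pos hl0]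
      have hIci : HasDerivWithinAt (Fsl s l) (F1 s l (-l)) (Ici (-l)) (-l) := by
        have base := (hd_abs_rpow hs (-l)).hasDerivWithinAt (s := Ici (-l))
        have hev : Fsl s l =ᶠ[𝓝[Ici (-l)] (-l)] fun u => |u| ^ s := by
          filter_upwards [mem_nhdsWithin_of_mem_nhds (Iio_mem_nhds (by linarith : -l < l)),
            self_mem_nhdsWithin] with u h1 h2
          exact Fsl_eq_in (abs_le.2 ⟨h2, le_of_lt h1⟩)
        have h4 := base.congr_of_eventuallyEq hev (Fsl_eq_in hml)
        rwa [F1, if_pos hml]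
      have hIic : HasDerivWithinAt (Fsl s l) (F1 s l (-l)) (Iic (-l)) (-l) := by
        have base := (hd_hF (s := s) (l := l) (by simp; linarith : (-l) ≠ 0)).hasDerivWithinAt (s := Iic (-l))
        have hFm : hF s l (-l) = hF s l l := by rw [hF, hF, abs_neg]
        have hset : ∀ u ∈ Iic (-l), Fsl s l u = hF s l u := by
          intro u hu
          rcases eq_or_lt_of_le (mem_Iic.1 hu) with h | h
          · rw [h, Fsl_eq_in hml, hFm, match_hF hl0, abs_neg, abs_of_pos hl0]
          · apply Fsl_eq_out
            rw [not_le, abs_of_neg (by linarith : u < 0)]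
            linarith
        have hpt : Fsl s l (-l) = hF s l (-l) := by
          rw [Fsl_eq_in hml, hFm, match_hF hl0, abs_neg, abs_of_pos hl0]
        have hval : F1 s l (-l) = hF1 s l (-l) := by
          rw [F1, if_pos hml, hF1, Real.sign_of_neg (by linarith : -l < 0), neg_sq,
            abs_neg, abs_of_pos hl0, match_hF1 hl0]
          ring
        exact hval ▸ (base.congr hset hpt)
      have h5 := hIic.union hIci
      rw [Iic_union_Ici] at h5
      exact hasDerivWithinAt_univ.1 h5
  · have ht0 : t ≠ 0 := by
      intro h; rw [h, abs_zero] at hgt; linarith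
    have h2 : Fsl s l =ᶠ[𝓝 t] hF s l := by
      filter_upwards [(isOpen_lt continuous_const continuous_abs).mem_nhds hgt] with u hu
      exact Fsl_eq_out (not_le.2 hu)
    have h3 := (hd_hF ht0).congr_of_eventuallyEq h2
    rwa [F1, if_neg (not_le.2 hgt)]


lemma prod_in (hs : 1 < s) (u : ℝ) :
    |u| ^ s * (s * (u * |u| ^ (s - 2))) = s * (u * |u| ^ (2 * s - 2)) := by
  rcases eq_or_ne u 0 with rfl | hu
  · simp
  · have h1 : |u| ^ s * |u| ^ (s - 2) = |u| ^ (2 * s - 2) := by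
      rw [← Real.rpow_add (abs_pos.2 hu)]
      ring_nf
    rw [← h1]
    ring

lemma hd_G (hs : 1 < s) (hl : 3 ≤ l) (t : ℝ) :
    HasDerivAt (fun u => Fsl s l u * F1 s l u) (G1 s l t) t := by
  have hl0 : (0:ℝ) < l := by linarith
  have hll : |l| ≤ l := by rw [abs_of_pos hl0]
  have hq : 0 < 2 * s - 2 := by linarith
  rcases lt_trichotomy |t| l with hlt | heq | hgt
  · have h2 : (fun u => Fsl s l u * F1 s l u) =ᶠ[𝓝 t] fun u => s * (u * |u| ^ (2 * s - 2)) := by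
      filter_upwards [(isOpen_lt continuous_abs continuous_const).mem_nhds hlt] with u hu
      rw [Fsl_eq_in (le_of_lt hu), F1, if_pos (le_of_lt (hu : |u| < l)), prod_in hs]
    have base := (hd_mul_abs_rpow hq t).const_mul s
    refine ((base.congr_of_eventuallyEq h2).congr_deriv ?_)
    rw [G1, if_pos hlt.le]
    ring
  · rcases (abs_eq hl0.le).1 heq with ht | ht
    · rw [ht]
      have hval : F1 s l l = hF1 s l l := by
        rw [F1, if_pos hll, hF1, Real.sign_of_pos hl0, one_mul, match_hF1 hl0, abs_of_pos hl0]
      have hpt : Fsl s l l = hF s l l := by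
        rw [Fsl_eq_in hll, abs_of_pos hl0]
        exact (match_hF hl0).symm
      have hIic : HasDerivWithinAt (fun u => Fsl s l u * F1 s l u) (G1 s l l) (Iic l) l := by
        have base := ((hd_mul_abs_rpow hq l).const_mul s).hasDerivWithinAt (s := Iic l)
        have hev : (fun u => Fsl s l u * F1 s l u) =ᶠ[𝓝[Iic l] l]
            fun u => s * (u * |u| ^ (2 * s - 2)) := by
          filter_upwards [mem_nhdsWithin_of_mem_nhds (Ioi_mem_nhds (by linarith : -l < l)),
            self_mem_nhdsWithin] with u h1 h2
          have hu : |u| ≤ l := abs_le.2 ⟨le_of_lt h1, h2⟩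
          rw [Fsl_eq_in hu, F1, if_pos hu, prod_in hs]
        have hptv : Fsl s l l * F1 s l l = s * (l * |l| ^ (2 * s - 2)) := by
          rw [Fsl_eq_in hll, F1, if_pos hll, prod_in hs]
        refine (base.congr_of_eventuallyEq hev hptv).congr_deriv ?_
        rw [G1, if_pos hll]
        ring
      have hIci : HasDerivWithinAt (fun u => Fsl s l u * F1 s l u) (G1 s l l) (Ici l) l := by
        have base := ((hd_hF (s := s) (l := l) (ne_of_gt hl0)).mul
          (hd_hF1 (s := s) (l := l) (ne_of_gt hl0))).hasDerivWithinAt (s := Ici l)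
        have hset : ∀ u ∈ Ici l, Fsl s l u * F1 s l u = hF s l u * hF1 s l u := by
          intro u hu
          rcases eq_or_lt_of_le (mem_Ici.1 hu) with h | h
          · rw [← h, hpt, hval]
          · have hn : ¬ |u| ≤ l := not_le.2 (by rw [abs_of_pos (by linarith)]; exact h)
            rw [Fsl_eq_out hn, F1, if_neg hn]
        refine (base.congr hset (by rw [hpt, hval]; rfl)).congr_deriv ?_
        rw [G1, if_pos hll, hF1, Real.sign_of_pos hl0, one_mul, hF2, abs_of_pos hl0,
          match_hF hl0, ← match_G1 hl0]
        ring
      have h5 := hIic.union hIci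
      rw [Iic_union_Ici] at h5
      exact hasDerivWithinAt_univ.1 h5
    · rw [ht]
      have hml : |(-l)| ≤ l := by rw [abs_neg, abs_of_pos hl0]
      have hFm : hF s l (-l) = hF s l l := by rw [hF, hF, abs_neg]
      have hval : F1 s l (-l) = hF1 s l (-l) := by
        rw [F1, if_pos hml, hF1, Real.sign_of_neg (by linarith : -l < 0), neg_sq,
          abs_neg, abs_of_pos hl0, match_hF1 hl0]
        ring
      have hpt : Fsl s l (-l) = hF s l (-l) := by
        rw [Fsl_eq_in hml, hFm, match_hF hl0, abs_neg, abs_of_pos hl0]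
      have hIci : HasDerivWithinAt (fun u => Fsl s l u * F1 s l u) (G1 s l (-l))
          (Ici (-l)) (-l) := by
        have base := ((hd_mul_abs_rpow hq (-l)).const_mul s).hasDerivWithinAt (s := Ici (-l))
        have hev : (fun u => Fsl s l u * F1 s l u) =ᶠ[𝓝[Ici (-l)] (-l)]
            fun u => s * (u * |u| ^ (2 * s - 2)) := by
          filter_upwards [mem_nhdsWithin_of_mem_nhds (Iio_mem_nhds (by linarith : -l < l)),
            self_mem_nhdsWithin] with u h1 h2
          have hu : |u| ≤ l := abs_le.2 ⟨h2, le_of_lt h1⟩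
          rw [Fsl_eq_in hu, F1, if_pos hu, prod_in hs]
        have hptv : Fsl s l (-l) * F1 s l (-l) = s * (-l * |(-l)| ^ (2 * s - 2)) := by
          rw [Fsl_eq_in hml, F1, if_pos hml, prod_in hs]
        refine (base.congr_of_eventuallyEq hev hptv).congr_deriv ?_
        rw [G1, if_pos hml]
        ring
      have hIic : HasDerivWithinAt (fun u => Fsl s l u * F1 s l u) (G1 s l (-l))
          (Iic (-l)) (-l) := by
        have hne : (-l) ≠ 0 := by simp; linarith
        have base := ((hd_hF (s := s) (l := l) hne).mul
          (hd_hF1 (s := s) (l := l) hne)).hasDerivWithinAt (s := Iic (-l))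
        have hset : ∀ u ∈ Iic (-l), Fsl s l u * F1 s l u = hF s l u * hF1 s l u := by
          intro u hu
          rcases eq_or_lt_of_le (mem_Iic.1 hu) with h | h
          · rw [h, hpt, hval]
          · have hn : ¬ |u| ≤ l := by
              rw [not_le, abs_of_neg (by linarith : u < 0)]
              linarith
            rw [Fsl_eq_out hn, F1, if_neg hn]
        refine (base.congr hset (by rw [hpt, hval]; rfl)).congr_deriv ?_
        rw [G1, if_pos hml, hF1, Real.sign_of_neg (by linarith : -l < 0), neg_sq, hF2,
          abs_neg, abs_of_pos hl0, hFm, match_hF hl0, ← match_G1 hl0]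
        ring
      have h5 := hIic.union hIci
      rw [Iic_union_Ici] at h5
      exact hasDerivWithinAt_univ.1 h5
  · have ht0 : t ≠ 0 := by
      intro h; rw [h, abs_zero] at hgt; linarith
    have hn : ¬ |t| ≤ l := not_le.2 hgt
    have h2 : (fun u => Fsl s l u * F1 s l u) =ᶠ[𝓝 t] fun u => hF s l u * hF1 s l u := by
      filter_upwards [(isOpen_lt continuous_const continuous_abs).mem_nhds hgt] with u hu
      have hnu : ¬ |u| ≤ l := not_le.2 hu
      rw [Fsl_eq_out hnu, F1, if_neg hnu]
    refine (((hd_hF ht0).mul (hd_hF1 ht0)).congr_of_eventuallyEq h2).congr_deriv ?_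
    rw [G1, if_neg hn]
    ring


lemma cont_mul_abs_rpow {q : ℝ} (hq : -1 < q) : Continuous fun t : ℝ => t * |t| ^ q := by
  rw [continuous_iff_continuousAt]
  intro t
  rcases eq_or_ne t 0 with rfl | ht
  · have key : Tendsto (fun t : ℝ => t * |t| ^ q) (𝓝 0) (𝓝 0) := by
      apply squeeze_zero_norm (a := fun t : ℝ => |t| ^ (q + 1))
      · intro u
        rcases eq_or_ne u 0 with rfl | hu
        · simp [Real.zero_rpow (by linarith : q + 1 ≠ 0)]
        · rw [Real.norm_eq_abs, abs_mul, abs_of_nonneg (Real.rpow_nonneg (abs_nonneg u) q),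
            Real.rpow_add_one (abs_ne_zero.2 hu) q]
          exact le_of_eq (mul_comm _ _)
      · have h0 : ContinuousAt (fun x : ℝ => x ^ (q + 1)) |(0:ℝ)| := by
          rw [abs_zero]; exact Real.continuousAt_rpow_const 0 (q + 1) (Or.inr (by linarith))
        have h2 : Tendsto (fun t : ℝ => |t| ^ (q + 1)) (𝓝 0) (𝓝 (|(0:ℝ)| ^ (q + 1))) :=
          h0.comp continuous_abs.continuousAt
        simpa [Real.zero_rpow (by linarith : q + 1 ≠ 0)] using h2
    have h1 : ContinuousAt (fun t : ℝ => t * |t| ^ q) 0 := by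
      unfold ContinuousAt
      simpa using key
    exact h1
  · exact continuousAt_id.mul
      ((Real.continuousAt_rpow_const |t| q (Or.inl (abs_ne_zero.2 ht))).comp
        continuous_abs.continuousAt)

lemma cont_abs_rpow {r : ℝ} (hr : 0 < r) : Continuous fun t : ℝ => |t| ^ r := by
  rw [continuous_iff_continuousAt]
  intro t
  exact (Real.continuousAt_rpow_const |t| r (Or.inr hr.le)).comp continuous_abs.continuousAt

lemma contAt_hF {t : ℝ} (ht : t ≠ 0) : ContinuousAt (hF s l) t := by
  show ContinuousAt (fun u : ℝ => Esl s l + Asl s l * |u| + Bsl s l * |u|⁻¹) t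
  exact (continuousAt_const.add (continuousAt_const.mul continuous_abs.continuousAt)).add
    (continuousAt_const.mul ((continuousAt_inv₀ (abs_ne_zero.2 ht)).comp
      continuous_abs.continuousAt))

lemma contAt_hF2 {t : ℝ} (ht : t ≠ 0) : ContinuousAt (hF2 s l) t := by
  show ContinuousAt (fun u : ℝ => 2 * Bsl s l * (|u| * u ^ 2)⁻¹) t
  exact continuousAt_const.mul ((continuous_abs.continuousAt.mul
    (continuousAt_id.pow 2)).inv₀ (mul_ne_zero (abs_ne_zero.2 ht) (pow_ne_zero 2 ht)))

lemma contAt_gplus (t : ℝ) (ht : t ≠ 0) :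
    ContinuousAt (fun u : ℝ => Asl s l - Bsl s l * (u ^ 2)⁻¹) t :=
  continuousAt_const.sub (continuousAt_const.mul
    ((continuousAt_id.pow 2).inv₀ (pow_ne_zero 2 ht)))

lemma sign_sq {u : ℝ} (hu : u ≠ 0) : Real.sign u ^ 2 = 1 := by
  rcases hu.lt_or_gt with h | h
  · rw [Real.sign_of_neg h]; norm_num
  · rw [Real.sign_of_pos h]; norm_num

lemma F1_out_pos (hl0 : 0 < l) {u : ℝ} (hu : l < u) :
    F1 s l u = Asl s l - Bsl s l * (u ^ 2)⁻¹ := by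
  have hu0 : (0:ℝ) < u := by linarith
  have h : ¬ |u| ≤ l := by rw [abs_of_pos hu0]; exact not_le.2 hu
  rw [F1, if_neg h, hF1, Real.sign_of_pos hu0, one_mul]

lemma F1_out_neg (hl0 : 0 < l) {u : ℝ} (hu : u < -l) :
    F1 s l u = -(Asl s l - Bsl s l * (u ^ 2)⁻¹) := by
  have hu0 : u < 0 := by linarith
  have h : ¬ |u| ≤ l := by rw [abs_of_neg hu0]; exact not_le.2 (by linarith)
  rw [F1, if_neg h, hF1, Real.sign_of_neg hu0]
  ring

lemma F1_at_l (hl0 : 0 < l) : F1 s l l = Asl s l - Bsl s l * (l ^ 2)⁻¹ := by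
  rw [F1, if_pos (le_of_eq (abs_of_pos hl0)), abs_of_pos hl0]
  exact (match_hF1 hl0).symm

lemma F1_at_negl (hl0 : 0 < l) : F1 s l (-l) = -(Asl s l - Bsl s l * ((-l) ^ 2)⁻¹) := by
  have hml : |(-l)| ≤ l := by rw [abs_neg, abs_of_pos hl0]
  rw [F1, if_pos hml, abs_neg, abs_of_pos hl0, neg_sq, match_hF1 hl0]
  ring

lemma G1_out (hl0 : 0 < l) {u : ℝ} (hu : l < |u|) :
    G1 s l u = (Asl s l - Bsl s l * (u ^ 2)⁻¹) ^ 2 + hF s l u * hF2 s l u := by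
  have hu0 : u ≠ 0 := by intro h; rw [h, abs_zero] at hu; linarith
  rw [G1, if_neg (not_le.2 hu), hF1, mul_pow, sign_sq hu0, one_mul]

lemma G1_at_l (hl0 : 0 < l) :
    G1 s l l = (Asl s l - Bsl s l * (l ^ 2)⁻¹) ^ 2 + hF s l l * hF2 s l l := by
  rw [G1, if_pos (le_of_eq (abs_of_pos hl0)), hF2, match_hF hl0, abs_of_pos hl0,
    match_G1 hl0]

lemma G1_at_negl (hl0 : 0 < l) :
    G1 s l (-l) = (Asl s l - Bsl s l * ((-l) ^ 2)⁻¹) ^ 2 + hF s l (-l) * hF2 s l (-l) := by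
  have hml : |(-l)| ≤ l := by rw [abs_neg, abs_of_pos hl0]
  have hFm : hF s l (-l) = hF s l l := by rw [hF, hF, abs_neg]
  have hF2m : hF2 s l (-l) = hF2 s l l := by rw [hF2, hF2, abs_neg, neg_sq]
  rw [neg_sq, hFm, hF2m, G1, if_pos hml, abs_neg, ← G1_at_l hl0, G1,
    if_pos (le_of_eq (abs_of_pos hl0))]

lemma contAt_gG (t : ℝ) (ht : t ≠ 0) :
    ContinuousAt (fun u : ℝ => (Asl s l - Bsl s l * (u ^ 2)⁻¹) ^ 2 + hF s l u * hF2 s l u) t :=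
  ((contAt_gplus t ht).pow 2).add ((contAt_hF ht).mul (contAt_hF2 ht))

lemma cont_F1 (hs : 1 < s) (hl : 3 ≤ l) : Continuous (F1 s l) := by
  have hl0 : (0:ℝ) < l := by linarith
  have hll : |l| ≤ l := by rw [abs_of_pos hl0]
  have hml : |(-l)| ≤ l := by rw [abs_neg, abs_of_pos hl0]
  have hin : Continuous fun u : ℝ => s * (u * |u| ^ (s - 2)) :=
    continuous_const.mul (cont_mul_abs_rpow (by linarith))
  rw [continuous_iff_continuousAt]
  intro t
  rcases lt_trichotomy |t| l with hlt | heq | hgt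
  · apply hin.continuousAt.congr
    filter_upwards [(isOpen_lt continuous_abs continuous_const).mem_nhds hlt] with u hu
    rw [F1, if_pos (le_of_lt (hu : |u| < l))]
  · rcases (abs_eq hl0.le).1 heq with ht | ht <;> rw [ht]
    · rw [← continuousWithinAt_univ, ← Iic_union_Ici (a := l), continuousWithinAt_union]
      constructor
      · apply ContinuousWithinAt.congr_of_eventuallyEq
          (hin.continuousAt.continuousWithinAt (s := Iic l)) ?_ ?_
        · filter_upwards [mem_nhdsWithin_of_mem_nhds (Ioi_mem_nhds (by linarith : -l < l)),
            self_mem_nhdsWithin] with u h1 h2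
          rw [F1, if_pos (abs_le.2 ⟨le_of_lt h1, h2⟩)]
        · rw [F1, if_pos hll]
      · apply ContinuousWithinAt.congr
          (((contAt_gplus l hl0.ne').continuousWithinAt (s := Ici l))) ?_ (F1_at_l hl0)
        intro u hu
        rcases eq_or_lt_of_le (mem_Ici.1 hu) with h | h
        · rw [← h]; exact F1_at_l hl0
        · exact F1_out_pos hl0 h
    · rw [← continuousWithinAt_univ, ← Iic_union_Ici (a := -l), continuousWithinAt_union]
      constructor
      · apply ContinuousWithinAt.congr
          ((((contAt_gplus (-l) (by simp; linarith)).neg).continuousWithinAt (s := Iic (-l))))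
          ?_ (F1_at_negl hl0)
        intro u hu
        rcases eq_or_lt_of_le (mem_Iic.1 hu) with h | h
        · rw [h]; exact F1_at_negl hl0
        · exact F1_out_neg hl0 h
      · apply ContinuousWithinAt.congr_of_eventuallyEq
          (hin.continuousAt.continuousWithinAt (s := Ici (-l))) ?_ ?_
        · filter_upwards [mem_nhdsWithin_of_mem_nhds (Iio_mem_nhds (by linarith : -l < l)),
            self_mem_nhdsWithin] with u h1 h2
          rw [F1, if_pos (abs_le.2 ⟨h2, le_of_lt h1⟩)]
        · rw [F1, if_pos hml]
  · have ht0 : t ≠ 0 := by intro h; rw [h, abs_zero] at hgt; linarith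
    rcases lt_abs.1 hgt with h | h
    · apply (contAt_gplus t ht0).congr
      filter_upwards [Ioi_mem_nhds h] with u hu
      exact (F1_out_pos hl0 hu).symm
    · apply ((contAt_gplus t ht0).neg).congr
      filter_upwards [Iio_mem_nhds (by linarith : t < -l)] with u hu
      exact (F1_out_neg hl0 hu).symm

lemma cont_G1 (hs : 1 < s) (hl : 3 ≤ l) : Continuous (G1 s l) := by
  have hl0 : (0:ℝ) < l := by linarith
  have hll : |l| ≤ l := by rw [abs_of_pos hl0]
  have hml : |(-l)| ≤ l := by rw [abs_neg, abs_of_pos hl0]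
  have hin : Continuous fun u : ℝ => s * (2 * s - 1) * |u| ^ (2 * s - 2) :=
    continuous_const.mul (cont_abs_rpow (by linarith))
  rw [continuous_iff_continuousAt]
  intro t
  rcases lt_trichotomy |t| l with hlt | heq | hgt
  · apply hin.continuousAt.congr
    filter_upwards [(isOpen_lt continuous_abs continuous_const).mem_nhds hlt] with u hu
    rw [G1, if_pos (le_of_lt (hu : |u| < l))]
  · rcases (abs_eq hl0.le).1 heq with ht | ht <;> rw [ht]
    · rw [← continuousWithinAt_univ, ← Iic_union_Ici (a := l), continuousWithinAt_union]
      constructor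
      · apply ContinuousWithinAt.congr_of_eventuallyEq
          (hin.continuousAt.continuousWithinAt (s := Iic l)) ?_ ?_
        · filter_upwards [mem_nhdsWithin_of_mem_nhds (Ioi_mem_nhds (by linarith : -l < l)),
            self_mem_nhdsWithin] with u h1 h2
          rw [G1, if_pos (abs_le.2 ⟨le_of_lt h1, h2⟩)]
        · rw [G1, if_pos hll]
      · apply ContinuousWithinAt.congr
          ((contAt_gG l hl0.ne').continuousWithinAt (s := Ici l)) ?_ (G1_at_l hl0)
        intro u hu
        rcases eq_or_lt_of_le (mem_Ici.1 hu) with h | h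
        · rw [← h]; exact G1_at_l hl0
        · exact G1_out hl0 (by rw [abs_of_pos (by linarith)]; exact h)
    · rw [← continuousWithinAt_univ, ← Iic_union_Ici (a := -l), continuousWithinAt_union]
      constructor
      · apply ContinuousWithinAt.congr
          ((contAt_gG (-l) (by simp; linarith)).continuousWithinAt (s := Iic (-l)))
          ?_ (G1_at_negl hl0)
        intro u hu
        rcases eq_or_lt_of_le (mem_Iic.1 hu) with h | h
        · rw [h]; exact G1_at_negl hl0
        · exact G1_out hl0 (by rw [abs_of_neg (by linarith : u < 0)]; linarith)
      · apply ContinuousWithinAt.congr_of_eventuallyEq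
          (hin.continuousAt.continuousWithinAt (s := Ici (-l))) ?_ ?_
        · filter_upwards [mem_nhdsWithin_of_mem_nhds (Iio_mem_nhds (by linarith : -l < l)),
            self_mem_nhdsWithin] with u h1 h2
          rw [G1, if_pos (abs_le.2 ⟨h2, le_of_lt h1⟩)]
        · rw [G1, if_pos hml]
  · have ht0 : t ≠ 0 := by intro h; rw [h, abs_zero] at hgt; linarith
    apply (contAt_gG t ht0).congr
    filter_upwards [(isOpen_lt continuous_const continuous_abs).mem_nhds hgt] with u hu
    exact (G1_out hl0 hu).symm


lemma lip_clamp : LipschitzWith 1 clamp :=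
  (LipschitzWith.id.min_const 1).max_const (-1)

lemma clamp_le (t : ℝ) : |clamp t| ≤ 1 := by
  rw [clamp, abs_le]
  constructor
  · exact le_max_right _ _
  · exact max_le (min_le_right t 1) (by norm_num)

lemma clamp_pos {t : ℝ} (ht : 1 ≤ t) : clamp t = 1 := by
  rw [clamp, min_eq_right ht, max_eq_left (by norm_num : (-1:ℝ) ≤ 1)]

lemma clamp_neg {t : ℝ} (ht : t ≤ -1) : clamp t = -1 := by
  rw [clamp, min_eq_left (by linarith : t ≤ 1), max_eq_right ht]

lemma hB_nonneg (hs : 1 < s) (hl : 3 ≤ l) : 0 ≤ Bsl s l := by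
  rw [Bsl]
  apply mul_nonneg (by nlinarith) (Real.rpow_nonneg (by linarith) _)

lemma mem_cocompact_out (hl0 : 0 < l) : {t : ℝ | l < |t|} ∈ cocompact ℝ := by
  rw [Filter.mem_cocompact]
  refine ⟨Icc (-l) l, isCompact_Icc, fun t ht => ?_⟩
  simp only [Set.mem_compl_iff, Set.mem_Icc, not_and_or, not_le] at ht
  simp only [Set.mem_setOf_eq, lt_abs]
  rcases ht with h | h
  · exact Or.inr (by linarith)
  · exact Or.inl h

lemma tendsto_inv_abs3 : Tendsto (fun t : ℝ => (|t| * t ^ 2)⁻¹) (cocompact ℝ) (𝓝 0) := by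
  apply Filter.Tendsto.inv_tendsto_atTop
  have h := (tendsto_pow_atTop (n := 3) (by norm_num)).comp
    (tendsto_norm_cocompact_atTop (E := ℝ))
  have heq : (fun t : ℝ => |t| * t ^ 2) = (fun x : ℝ => x ^ 3) ∘ norm := by
    funext t
    simp only [Function.comp_apply, Real.norm_eq_abs]
    rw [← sq_abs t]
    ring
  rw [heq]
  exact h

lemma tendsto_inv_sq2 : Tendsto (fun t : ℝ => (t ^ 2 * t ^ 2)⁻¹) (cocompact ℝ) (𝓝 0) := by
  apply Filter.Tendsto.inv_tendsto_atTop
  have h := (tendsto_pow_atTop (n := 4) (by norm_num)).comp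
    (tendsto_norm_cocompact_atTop (E := ℝ))
  have heq : (fun t : ℝ => t ^ 2 * t ^ 2) = (fun x : ℝ => x ^ 4) ∘ norm := by
    funext t
    simp only [Function.comp_apply, Real.norm_eq_abs]
    rw [← sq_abs t]
    ring
  rw [heq]
  exact h

lemma tendsto_inv_sq : Tendsto (fun t : ℝ => (t ^ 2)⁻¹) (cocompact ℝ) (𝓝 0) := by
  apply Filter.Tendsto.inv_tendsto_atTop
  have h := (tendsto_pow_atTop (n := 2) (by norm_num)).comp
    (tendsto_norm_cocompact_atTop (E := ℝ))
  have heq : (fun t : ℝ => t ^ 2) = (fun x : ℝ => x ^ 2) ∘ norm := by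
    funext t
    simp only [Function.comp_apply, Real.norm_eq_abs, sq_abs]
  rw [heq]
  exact h

lemma G1_out_ident (hs : 1 < s) (hl : 3 ≤ l) {t : ℝ} (ht : l < |t|) :
    G1 s l t = Asl s l ^ 2 + 2 * Bsl s l * Esl s l * (|t| * t ^ 2)⁻¹
      + 3 * Bsl s l ^ 2 * (t ^ 2 * t ^ 2)⁻¹ := by
  have hl0 : (0:ℝ) < l := by linarith
  have ht0 : t ≠ 0 := by intro h; rw [h, abs_zero] at ht; linarith
  have habs : |t| ≠ 0 := abs_ne_zero.2 ht0
  rw [G1_out hl0 ht, hF, hF2, ← sq_abs t]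
  generalize hgen : |t| = x at habs ⊢
  field_simp
  ring

lemma tendsto_G1 (hs : 1 < s) (hl : 3 ≤ l) :
    Tendsto (G1 s l) (cocompact ℝ) (𝓝 (Asl s l ^ 2)) := by
  have hl0 : (0:ℝ) < l := by linarith
  have key : Tendsto (fun t : ℝ => Asl s l ^ 2 + 2 * Bsl s l * Esl s l * (|t| * t ^ 2)⁻¹
      + 3 * Bsl s l ^ 2 * (t ^ 2 * t ^ 2)⁻¹) (cocompact ℝ)
      (𝓝 (Asl s l ^ 2 + 2 * Bsl s l * Esl s l * 0 + 3 * Bsl s l ^ 2 * 0)) :=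
    (tendsto_const_nhds.add (tendsto_inv_abs3.const_mul _)).add (tendsto_inv_sq2.const_mul _)
  have hev : (fun t : ℝ => Asl s l ^ 2 + 2 * Bsl s l * Esl s l * (|t| * t ^ 2)⁻¹
      + 3 * Bsl s l ^ 2 * (t ^ 2 * t ^ 2)⁻¹) =ᶠ[cocompact ℝ] G1 s l := by
    filter_upwards [mem_cocompact_out hl0] with t ht
    exact (G1_out_ident hs hl ht).symm
  have h2 := key.congr' hev
  simpa using h2

lemma tendsto_rF1 (hs : 1 < s) (hl : 3 ≤ l) :
    Tendsto (fun t => F1 s l t - Asl s l * clamp t) (cocompact ℝ) (𝓝 0) := by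
  have hl0 : (0:ℝ) < l := by linarith
  have hB := hB_nonneg hs hl
  apply squeeze_zero_norm' (a := fun t : ℝ => Bsl s l * (t ^ 2)⁻¹)
  · filter_upwards [mem_cocompact_out hl0] with t ht
    have hb : (0:ℝ) ≤ Bsl s l * (t ^ 2)⁻¹ := by
      have ht0 : t ≠ 0 := by intro h; rw [h, abs_zero] at ht; linarith
      have : (0:ℝ) < t ^ 2 := by positivity
      positivity
    rcases lt_abs.1 ht with h | h
    · rw [F1_out_pos hl0 h, clamp_pos (by linarith), mul_one,
        show Asl s l - Bsl s l * (t ^ 2)⁻¹ - Asl s l = -(Bsl s l * (t ^ 2)⁻¹) by ring,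
        norm_neg, Real.norm_eq_abs, abs_of_nonneg hb]
    · rw [F1_out_neg hl0 (by linarith : t < -l), clamp_neg (by linarith),
        show -(Asl s l - Bsl s l * (t ^ 2)⁻¹) - Asl s l * (-1) = Bsl s l * (t ^ 2)⁻¹ by ring,
        Real.norm_eq_abs, abs_of_nonneg hb]
  · simpa using tendsto_inv_sq.const_mul (Bsl s l)

lemma bdd_of_cocompact {f : ℝ → ℝ} (hf : Continuous f) {c : ℝ}
    (h : Tendsto f (cocompact ℝ) (𝓝 c)) : ∃ M : ℝ, ∀ t, |f t| ≤ M := by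
  have h1 : {t : ℝ | dist (f t) c < 1} ∈ cocompact ℝ := h (Metric.ball_mem_nhds c one_pos)
  obtain ⟨K, hK, hsub⟩ := Filter.mem_cocompact.1 h1
  obtain ⟨C, hC⟩ := hK.exists_bound_of_continuousOn hf.continuousOn
  refine ⟨max C (|c| + 1), fun t => ?_⟩
  by_cases htK : t ∈ K
  · exact le_trans (by rw [← Real.norm_eq_abs]; exact hC t htK) (le_max_left _ _)
  · have h2 : dist (f t) c < 1 := hsub htK
    rw [Real.dist_eq] at h2
    have h3 : |f t| - |c| ≤ |f t - c| := abs_sub_abs_le_abs_sub _ _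
    have : |f t| ≤ |c| + 1 := by linarith
    exact le_trans this (le_max_right _ _)

lemma deriv_Fsl (hs : 1 < s) (hl : 3 ≤ l) : deriv (Fsl s l) = F1 s l :=
  funext fun t => (hd_F hs hl t).deriv

lemma deriv_GG (hs : 1 < s) (hl : 3 ≤ l) :
    deriv (fun u => Fsl s l u * F1 s l u) = G1 s l :=
  funext fun t => (hd_G hs hl t).deriv

lemma uc_F1 (hs : 1 < s) (hl : 3 ≤ l) : UniformContinuous (F1 s l) := by
  have h1 : UniformContinuous fun t : ℝ => Asl s l • clamp t :=
    (lip_clamp.uniformContinuous).const_smul (Asl s l)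
  have h2 : UniformContinuous fun t => F1 s l t - Asl s l * clamp t :=
    ((cont_F1 hs hl).sub (continuous_const.mul lip_clamp.continuous)).uniformContinuous_of_tendsto_cocompact
      (tendsto_rF1 hs hl)
  have h3 : (fun t => (F1 s l t - Asl s l * clamp t) + Asl s l • clamp t) = F1 s l := by
    funext t
    simp [smul_eq_mul]
  rw [← h3]
  exact h2.add h1

lemma bdd_F1 (hs : 1 < s) (hl : 3 ≤ l) : ∃ M : ℝ, ∀ t, |F1 s l t| ≤ M := by
  obtain ⟨M, hM⟩ := bdd_of_cocompact
    ((cont_F1 hs hl).sub (continuous_const.mul lip_clamp.continuous)) (tendsto_rF1 hs hl)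
  refine ⟨M + |Asl s l|, fun t => ?_⟩
  have h1 : |F1 s l t| ≤ |F1 s l t - Asl s l * clamp t| + |Asl s l * clamp t| := by
    have := abs_add_le (F1 s l t - Asl s l * clamp t) (Asl s l * clamp t)
    simpa using this
  have h2 : |Asl s l * clamp t| ≤ |Asl s l| := by
    rw [abs_mul]
    exact mul_le_of_le_one_right (abs_nonneg _) (clamp_le t)
  have : |F1 s l t - Asl s l * clamp t| ≤ M := hM t
  linarith

end lemmas

end StmtSixAux

/-- For `s > 1`, `l ≥ 3`, the function `G_{s,l} = F_{s,l} · F'_{s,l}` is continuously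
differentiable, `G'_{s,l}` is bounded and uniformly continuous on `ℝ`, and `F'_{s,l}` is
bounded and uniformly continuous on `ℝ`. -/
theorem stmt_6 (s l : ℝ) (hs : 1 < s) (hl : 3 ≤ l) :
    ContDiff ℝ 1 (fun t => Fsl s l t * deriv (Fsl s l) t) ∧
    (∃ M : ℝ, ∀ t : ℝ, |deriv (fun u => Fsl s l u * deriv (Fsl s l) u) t| ≤ M) ∧
    UniformContinuous (deriv (fun u => Fsl s l u * deriv (Fsl s l) u)) ∧
    (∃ M : ℝ, ∀ t : ℝ, |deriv (Fsl s l) t| ≤ M) ∧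
    UniformContinuous (deriv (Fsl s l)) := by
  have hrw : (fun t => Fsl s l t * deriv (Fsl s l) t) = fun u => Fsl s l u * F1 s l u := by
    funext u
    rw [deriv_Fsl hs hl]
  refine ⟨?_, ?_, ?_, ?_, ?_⟩
  · rw [hrw]
    exact contDiff_one_iff_deriv.2 ⟨fun t => (hd_G hs hl t).differentiableAt,
      by rw [deriv_GG hs hl]; exact cont_G1 hs hl⟩
  · rw [hrw, deriv_GG hs hl]
    exact bdd_of_cocompact (cont_G1 hs hl) (tendsto_G1 hs hl)
  · rw [hrw, deriv_GG hs hl]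
    exact (cont_G1 hs hl).uniformContinuous_of_tendsto_cocompact (tendsto_G1 hs hl)
  · rw [deriv_Fsl hs hl]
    exact bdd_F1 hs hl
  · rw [deriv_Fsl hs hl]
    exact uc_F1 hs hl
end

section
/- Let s > 1 and l ≥ 3. Then for every t ∈ ℝ, |t·F'_{s,l}(t)| ≤ 4s·F_{s,l}(t). -/
set_option maxHeartbeats 1000000


section aux
variable {s l : ℝ} (hs : 1 < s) (hl : 3 ≤ l)

lemma Fsl_even (s l t : ℝ) : Fsl s l (-t) = Fsl s l t := by
  simp [Fsl, abs_neg]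

-- derivative at 0 < t < l
lemma deriv_inner (hs : 1 < s) (hl : 3 ≤ l) {t : ℝ} (ht0 : 0 < t) (htl : t < l) :
    HasDerivAt (Fsl s l) (s * t ^ (s - 1)) t := by
  have h := Real.hasDerivAt_rpow_const (p := s) (Or.inl ht0.ne')
  refine h.congr_of_eventuallyEq ?_
  have hmem : Set.Ioo (0:ℝ) l ∈ nhds t := Ioo_mem_nhds ht0 htl
  filter_upwards [hmem] with x hx
  rw [Fsl, if_pos (by rw [abs_of_pos hx.1]; exact hx.2.le), abs_of_pos hx.1]

-- derivative at t > l
lemma deriv_outer (hs : 1 < s) (hl : 3 ≤ l) {t : ℝ} (htl : l < t) :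
    HasDerivAt (Fsl s l)
      ((s * (s + 1) / 2) * l ^ (s - 1) + (s * (s - 1) / 2) * l ^ (s + 1) * (-(t ^ 2)⁻¹)) t := by
  have ht0 : (0:ℝ) < t := lt_of_le_of_lt (by linarith) htl
  have h1 : HasDerivAt (fun x : ℝ => (1 - s ^ 2) * l ^ s + (s * (s + 1) / 2) * l ^ (s - 1) * x
      + (s * (s - 1) / 2) * l ^ (s + 1) * x⁻¹)
      ((s * (s + 1) / 2) * l ^ (s - 1) + (s * (s - 1) / 2) * l ^ (s + 1) * (-(t ^ 2)⁻¹)) t := by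
    have := ((hasDerivAt_id t).const_mul ((s * (s + 1) / 2) * l ^ (s - 1))).const_add
      ((1 - s ^ 2) * l ^ s)
    have h2 := (hasDerivAt_inv ht0.ne').const_mul ((s * (s - 1) / 2) * l ^ (s + 1))
    have h3 := this.add h2
    simp only [id, mul_one] at h3
    exact h3
  refine h1.congr_of_eventuallyEq ?_
  filter_upwards [Ioi_mem_nhds htl] with x hx
  have hx0 : (0:ℝ) < x := lt_trans (by linarith : (0:ℝ) < l) hx
  rw [Fsl, if_neg (by rw [abs_of_pos hx0]; exact not_le.mpr hx), abs_of_pos hx0]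

-- derivative at t = l
lemma deriv_at_l (hs : 1 < s) (hl : 3 ≤ l) : HasDerivAt (Fsl s l) (s * l ^ (s - 1)) l := by
  have hl0 : (0:ℝ) < l := by linarith
  -- within Iic l
  have hleft : HasDerivWithinAt (Fsl s l) (s * l ^ (s - 1)) (Set.Iic l) l := by
    have h := (Real.hasDerivAt_rpow_const (p := s) (Or.inl hl0.ne')).hasDerivWithinAt
      (s := Set.Iic l)
    refine h.congr_of_eventuallyEq ?_ ?_
    · filter_upwards [self_mem_nhdsWithin,
        mem_nhdsWithin_of_mem_nhds (Ioi_mem_nhds hl0)] with x hx1 hx2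
      rw [Fsl, if_pos (by rw [abs_of_pos hx2]; exact hx1), abs_of_pos hx2]
    · rw [Fsl, if_pos (by rw [abs_of_pos hl0]), abs_of_pos hl0]
  -- within Ici l
  have hright : HasDerivWithinAt (Fsl s l) (s * l ^ (s - 1)) (Set.Ici l) l := by
    have hG : HasDerivAt (fun x : ℝ => (1 - s ^ 2) * l ^ s + (s * (s + 1) / 2) * l ^ (s - 1) * x
        + (s * (s - 1) / 2) * l ^ (s + 1) * x⁻¹)
        ((s * (s + 1) / 2) * l ^ (s - 1) + (s * (s - 1) / 2) * l ^ (s + 1) * (-(l ^ 2)⁻¹)) l := by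
      have := ((hasDerivAt_id l).const_mul ((s * (s + 1) / 2) * l ^ (s - 1))).const_add
        ((1 - s ^ 2) * l ^ s)
      have h2 := (hasDerivAt_inv hl0.ne').const_mul ((s * (s - 1) / 2) * l ^ (s + 1))
      have h3 := this.add h2
      simp only [id, mul_one] at h3
      exact h3
    have hderiv_eq : (s * (s + 1) / 2) * l ^ (s - 1)
        + (s * (s - 1) / 2) * l ^ (s + 1) * (-(l ^ 2)⁻¹) = s * l ^ (s - 1) := by
      have hpow : l ^ (s + 1) = l ^ (s - 1) * l ^ 2 := by
        rw [Real.rpow_add_one hl0.ne' s, ← sub_add_cancel s 1, Real.rpow_add_one hl0.ne' (s-1)]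
        ring_nf
      rw [hpow]
      field_simp
      ring
    rw [hderiv_eq] at hG
    refine hG.hasDerivWithinAt.congr ?_ ?_
    · intro x hx
      rcases eq_or_lt_of_le (Set.mem_Ici.mp hx) with rfl | hlt
      · -- value at l agrees
        have hpow1 : l ^ (s - 1) * l = l ^ s := by
          rw [← Real.rpow_add_one hl0.ne' (s-1), sub_add_cancel]
        have hpow2 : l ^ (s + 1) * l⁻¹ = l ^ s := by
          rw [Real.rpow_add_one hl0.ne' s]; field_simp
        rw [Fsl, if_pos (by rw [abs_of_pos hl0]), abs_of_pos hl0]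
        have : (1 - s ^ 2) * l ^ s + s * (s + 1) / 2 * l ^ (s - 1) * l
            + s * (s - 1) / 2 * l ^ (s + 1) * l⁻¹
            = (1 - s ^ 2) * l ^ s + s * (s + 1) / 2 * (l ^ (s-1) * l)
            + s * (s - 1) / 2 * (l ^ (s+1) * l⁻¹) := by ring
        rw [this, hpow1, hpow2]; ring
      · have hx0 : (0:ℝ) < x := lt_trans hl0 hlt
        rw [Fsl, if_neg (by rw [abs_of_pos hx0]; exact not_le.mpr hlt), abs_of_pos hx0]
    · have hpow1 : l ^ (s - 1) * l = l ^ s := by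
        rw [← Real.rpow_add_one hl0.ne' (s-1), sub_add_cancel]
      have hpow2 : l ^ (s + 1) * l⁻¹ = l ^ s := by
        rw [Real.rpow_add_one hl0.ne' s]; field_simp
      rw [Fsl, if_pos (by rw [abs_of_pos hl0]), abs_of_pos hl0]
      have : (1 - s ^ 2) * l ^ s + s * (s + 1) / 2 * l ^ (s - 1) * l
          + s * (s - 1) / 2 * l ^ (s + 1) * l⁻¹
          = (1 - s ^ 2) * l ^ s + s * (s + 1) / 2 * (l ^ (s-1) * l)
          + s * (s - 1) / 2 * (l ^ (s+1) * l⁻¹) := by ring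
      rw [this, hpow1, hpow2]; ring
  have := hleft.union hright
  rw [Set.Iic_union_Ici] at this
  exact this.hasDerivAt (by simp)

end aux

/-- For `s > 1` and `l ≥ 3`: `|t · F'_{s,l}(t)| ≤ 4s · F_{s,l}(t)` for every `t ∈ ℝ`. -/
theorem stmt_7 (s l : ℝ) (hs : 1 < s) (hl : 3 ≤ l) :
    ∀ t : ℝ, |t * deriv (Fsl s l) t| ≤ 4 * s * Fsl s l t := by
  have hl0 : (0:ℝ) < l := by linarith
  have key : ∀ t : ℝ, 0 ≤ t → |t * deriv (Fsl s l) t| ≤ 4 * s * Fsl s l t := by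
    intro t ht
    rcases eq_or_lt_of_le ht with rfl | ht0
    · rw [zero_mul, abs_zero, Fsl, if_pos (by rw [abs_zero]; linarith), abs_zero,
        Real.zero_rpow (by linarith : s ≠ 0), mul_zero]
    have hF_inner : ∀ u : ℝ, 0 < u → u ≤ l → Fsl s l u = u ^ s := by
      intro u hu0 hul
      rw [Fsl, if_pos (by rw [abs_of_pos hu0]; exact hul), abs_of_pos hu0]
    have htd : ∀ u : ℝ, 0 < u → u * (s * u ^ (s - 1)) = s * u ^ s := by
      intro u hu0
      rw [mul_comm u, mul_assoc, ← Real.rpow_add_one hu0.ne' (s - 1), sub_add_cancel]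
    rcases lt_trichotomy t l with hlt | rfl | hgt
    · rw [(deriv_inner hs hl ht0 hlt).deriv, htd t ht0, hF_inner t ht0 hlt.le,
        abs_of_nonneg (by positivity)]
      nlinarith [Real.rpow_nonneg ht0.le s]
    · rw [(deriv_at_l hs hl).deriv, htd t ht0, hF_inner t ht0 le_rfl,
        abs_of_nonneg (by positivity)]
      nlinarith [Real.rpow_nonneg ht0.le s]
    · rw [(deriv_outer hs hl hgt).deriv]
      have hA0 : (0:ℝ) < l ^ (s - 1) := Real.rpow_pos_of_pos hl0 _
      set A := l ^ (s - 1) with hA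
      have hls : l ^ s = A * l := by
        rw [hA, ← Real.rpow_add_one hl0.ne' (s - 1), sub_add_cancel]
      have hls1 : l ^ (s + 1) = A * l * l := by
        rw [Real.rpow_add_one hl0.ne' s, hls]
      have hF : Fsl s l t = (1 - s ^ 2) * (A * l) + s * (s + 1) / 2 * A * t
          + s * (s - 1) / 2 * (A * l * l) * t⁻¹ := by
        rw [Fsl, if_neg (by rw [abs_of_pos ht0]; exact not_le.mpr hgt), abs_of_pos ht0,
          hls, hls1]
      rw [hF, hls1]
      have h4 : 0 < t⁻¹ := inv_pos.mpr ht0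
      have hTD : t * (s * (s + 1) / 2 * A + s * (s - 1) / 2 * (A * l * l) * -(t ^ 2)⁻¹)
          = (s * (s + 1) / 2 * A * (t * t) - s * (s - 1) / 2 * A * (l * l)) * t⁻¹ := by
        field_simp
        ring
      have hE : 4 * s * ((1 - s ^ 2) * (A * l) + s * (s + 1) / 2 * A * t
            + s * (s - 1) / 2 * (A * l * l) * t⁻¹)
          = (4 * s * ((1 - s ^ 2) * (A * l) * t + s * (s + 1) / 2 * A * (t * t)
            + s * (s - 1) / 2 * A * (l * l))) * t⁻¹ := by
        field_simp
      rw [hTD, hE, abs_mul, abs_of_pos h4]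
      refine mul_le_mul_of_nonneg_right ?_ h4.le
      have hP0 : 0 ≤ s * (s + 1) / 2 * A * (t * t) - s * (s - 1) / 2 * A * (l * l) := by
        nlinarith [mul_nonneg hA0.le (by nlinarith : (0:ℝ) ≤ t * t - l * l),
          mul_nonneg (mul_nonneg hA0.le hl0.le) hl0.le]
      rw [abs_of_nonneg hP0]
      have hh1 : 0 ≤ ((4 * s - 1) * (s * (s + 1) / 2)) * (A * (t - l) ^ 2) :=
        mul_nonneg (by nlinarith) (mul_nonneg hA0.le (sq_nonneg _))
      have hh2 : 0 ≤ (3 * s * (s + 1)) * (A * l * (t - l)) :=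
        mul_nonneg (by nlinarith) (mul_nonneg (mul_nonneg hA0.le hl0.le) (by linarith))
      have hh3 : 0 ≤ 3 * s * (A * l * l) :=
        mul_nonneg (by nlinarith) (mul_nonneg (mul_nonneg hA0.le hl0.le) hl0.le)
      linarith [hh1, hh2, hh3]
  intro t
  rcases le_or_gt 0 t with h | h
  · exact key t h
  · have hFe : Fsl s l t = Fsl s l (-t) := (Fsl_even s l t).symm
    have hde : deriv (Fsl s l) t = -deriv (Fsl s l) (-t) := by
      conv_lhs => rw [show Fsl s l = fun x => Fsl s l (-x) from funext fun x => (Fsl_even s l x).symm]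
      rw [deriv_comp_neg]
    rw [hFe, hde]
    have : |t * -deriv (Fsl s l) (-t)| = |(-t) * deriv (Fsl s l) (-t)| := by
      rw [show t * -deriv (Fsl s l) (-t) = (-t) * deriv (Fsl s l) (-t) by ring]
    rw [this]
    exact key (-t) (by linarith)
end

section
/- Let s > 1 and let l, k be real numbers with 3 ≤ l < k. Then for every t ∈ ℝ, F_{s,l}(t) ≤ F_{s,k}(t). -/
open Set

/-- Monotonicity from a nonnegative derivative on a closed interval. -/
lemma monoIcc_aux {a b : ℝ} {f f' : ℝ → ℝ}
    (hd : ∀ x ∈ Set.Icc a b, HasDerivAt f (f' x) x)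
    (h0 : ∀ x ∈ Set.Ioo a b, 0 ≤ f' x) : MonotoneOn f (Set.Icc a b) := by
  apply monotoneOn_of_deriv_nonneg (convex_Icc a b)
  · exact fun x hx => (hd x hx).continuousAt.continuousWithinAt
  · intro x hx
    rw [interior_Icc] at hx
    exact ((hd x (Ioo_subset_Icc_self hx)).differentiableAt).differentiableWithinAt
  · intro x hx
    rw [interior_Icc] at hx
    rw [(hd x (Ioo_subset_Icc_self hx)).deriv]
    exact h0 x hx

/-- The tail function lies below `t ^ s` for `t ≥ l`. -/
lemma aux_tail_le (s l : ℝ) (hs : 1 < s) (hl : 0 < l) {t : ℝ} (hlt : l ≤ t) :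
    (1 - s ^ 2) * l ^ s + (s * (s + 1) / 2) * l ^ (s - 1) * t
      + (s * (s - 1) / 2) * l ^ (s + 1) * t⁻¹ ≤ t ^ s := by
  have ht0 : 0 < t := lt_of_lt_of_le hl hlt
  set A : ℝ := (s * (s + 1) / 2) * l ^ (s - 1) with hA
  set B : ℝ := (s * (s - 1) / 2) * l ^ (s + 1) with hB
  set f : ℝ → ℝ := fun x => x ^ s - ((1 - s ^ 2) * l ^ s + A * x + B * x ^ (-1 : ℝ)) with hf
  set f' : ℝ → ℝ := fun x => s * x ^ (s - 1) - A + B * x ^ (-2 : ℝ) with hf'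
  set f'' : ℝ → ℝ := fun x => s * (s - 1) * x ^ (s - 2) - 2 * B * x ^ (-3 : ℝ) with hf''
  have hderiv : ∀ x : ℝ, 0 < x → HasDerivAt f (f' x) x := by
    intro x hx
    have h1 : HasDerivAt (fun y : ℝ => y ^ s) (s * x ^ (s - 1)) x :=
      Real.hasDerivAt_rpow_const (Or.inl hx.ne')
    have h3 : HasDerivAt (fun y : ℝ => y ^ (-1 : ℝ)) ((-1) * x ^ ((-1 : ℝ) - 1)) x :=
      Real.hasDerivAt_rpow_const (Or.inl hx.ne')
    have h : HasDerivAt f (s * x ^ (s - 1) - (0 + A * 1 + B * ((-1) * x ^ ((-1 : ℝ) - 1)))) x :=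
      h1.sub (((hasDerivAt_const x _).add ((hasDerivAt_id x).const_mul A)).add
        (h3.const_mul B))
    convert h using 1
    have : ((-1 : ℝ) - 1) = (-2 : ℝ) := by norm_num
    rw [this]; simp [hf']; ring
  have hderiv' : ∀ x : ℝ, 0 < x → HasDerivAt f' (f'' x) x := by
    intro x hx
    have h1 : HasDerivAt (fun y : ℝ => y ^ (s - 1)) ((s - 1) * x ^ (s - 1 - 1)) x :=
      Real.hasDerivAt_rpow_const (Or.inl hx.ne')
    have h3 : HasDerivAt (fun y : ℝ => y ^ (-2 : ℝ)) ((-2) * x ^ ((-2 : ℝ) - 1)) x :=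
      Real.hasDerivAt_rpow_const (Or.inl hx.ne')
    have h : HasDerivAt f' (s * ((s - 1) * x ^ (s - 1 - 1)) - 0 + B * ((-2) * x ^ ((-2 : ℝ) - 1))) x :=
      ((h1.const_mul s).sub (hasDerivAt_const x A)).add (h3.const_mul B)
    convert h using 1
    have e1 : (s - 1 - 1) = s - 2 := by ring
    have e2 : ((-2 : ℝ) - 1) = (-3 : ℝ) := by norm_num
    rw [e1, e2]; simp [hf'']; ring
  -- f'' nonneg on [l, ∞)
  have hf''nonneg : ∀ x : ℝ, l ≤ x → 0 ≤ f'' x := by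
    intro x hx
    have hx0 : 0 < x := lt_of_lt_of_le hl hx
    have h1 : l ^ (s + 1) ≤ x ^ (s + 1) := Real.rpow_le_rpow hl.le hx (by linarith)
    have h2 : x ^ (s + 1) * x ^ (-3 : ℝ) = x ^ (s - 2) := by
      rw [← Real.rpow_add hx0]; congr 1; ring
    have h3 : 0 < x ^ (-3 : ℝ) := Real.rpow_pos_of_pos hx0 _
    have hss : 0 ≤ s * (s - 1) := by nlinarith
    have : 2 * B * x ^ (-3 : ℝ) ≤ s * (s - 1) * x ^ (s - 2) := by
      rw [hB, ← h2]
      have := mul_le_mul_of_nonneg_right h1 h3.le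
      nlinarith
    simp only [hf'']; linarith
  -- f' l = 0
  have hf'l : f' l = 0 := by
    have e1 : l ^ (s + 1) * l ^ (-2 : ℝ) = l ^ (s - 1) := by
      rw [← Real.rpow_add hl]; congr 1; ring
    simp only [hf', hA, hB, mul_assoc]
    rw [← mul_assoc (s * (s - 1) / 2) _ _, mul_assoc (s * (s - 1) / 2) _ _, e1]
    ring
  -- f' nonneg on [l, ∞)
  have hf'nonneg : ∀ x : ℝ, l ≤ x → 0 ≤ f' x := by
    intro x hx
    have hmono : MonotoneOn f' (Set.Icc l x) :=
      monoIcc_aux (fun y hy => hderiv' y (lt_of_lt_of_le hl hy.1))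
        (fun y hy => hf''nonneg y hy.1.le)
    have := hmono (left_mem_Icc.mpr hx) (right_mem_Icc.mpr hx) hx
    rw [hf'l] at this; exact this
  -- f l = 0
  have hfl : f l = 0 := by
    have e1 : l ^ (s - 1) * l = l ^ s := by
      nth_rewrite 2 [← Real.rpow_one l]
      rw [← Real.rpow_add hl]; ring_nf
    have e2 : l ^ (s + 1) * l ^ (-1 : ℝ) = l ^ s := by
      rw [← Real.rpow_add hl]; congr 1; ring
    simp only [hf, hA, hB]
    rw [mul_assoc (s * (s + 1) / 2) _ _, e1, mul_assoc (s * (s - 1) / 2) _ _, e2]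
    ring
  have hmono : MonotoneOn f (Set.Icc l t) :=
    monoIcc_aux (fun y hy => hderiv y (lt_of_lt_of_le hl hy.1))
      (fun y hy => hf'nonneg y hy.1.le)
  have hft : 0 ≤ f t := by
    have := hmono (left_mem_Icc.mpr hlt) (right_mem_Icc.mpr hlt) hlt
    rw [hfl] at this; exact this
  have htinv : t ^ (-1 : ℝ) = t⁻¹ := Real.rpow_neg_one t
  simp only [hf, htinv] at hft
  linarith

/-- The tail function is monotone in the cutoff parameter. -/
lemma aux_tail_mono (s : ℝ) (hs : 1 < s) {l k t : ℝ} (hl : 0 < l) (hlk : l ≤ k)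
    (ht : k ≤ t) :
    (1 - s ^ 2) * l ^ s + (s * (s + 1) / 2) * l ^ (s - 1) * t
      + (s * (s - 1) / 2) * l ^ (s + 1) * t⁻¹
    ≤ (1 - s ^ 2) * k ^ s + (s * (s + 1) / 2) * k ^ (s - 1) * t
      + (s * (s - 1) / 2) * k ^ (s + 1) * t⁻¹ := by
  have ht0 : 0 < t := lt_of_lt_of_le (lt_of_lt_of_le hl hlk) ht
  set ψ : ℝ → ℝ := fun x => (1 - s ^ 2) * x ^ s + (s * (s + 1) / 2) * x ^ (s - 1) * t
      + (s * (s - 1) / 2) * x ^ (s + 1) * t⁻¹ with hψ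
  set ψ' : ℝ → ℝ := fun x => (s * (s - 1) * (s + 1) / 2) * x ^ (s - 2) * t⁻¹ * (t - x) ^ 2
    with hψ'
  have hderiv : ∀ x : ℝ, 0 < x → HasDerivAt ψ (ψ' x) x := by
    intro x hx
    have h1 : HasDerivAt (fun y : ℝ => y ^ s) (s * x ^ (s - 1)) x :=
      Real.hasDerivAt_rpow_const (Or.inl hx.ne')
    have h2 : HasDerivAt (fun y : ℝ => y ^ (s - 1)) ((s - 1) * x ^ (s - 1 - 1)) x :=
      Real.hasDerivAt_rpow_const (Or.inl hx.ne')
    have h3 : HasDerivAt (fun y : ℝ => y ^ (s + 1)) ((s + 1) * x ^ (s + 1 - 1)) x :=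
      Real.hasDerivAt_rpow_const (Or.inl hx.ne')
    have h : HasDerivAt ψ
        ((s * x ^ (s - 1)) * (1 - s ^ 2)
          + ((s - 1) * x ^ (s - 1 - 1)) * (s * (s + 1) / 2) * t
          + ((s + 1) * x ^ (s + 1 - 1)) * (s * (s - 1) / 2) * t⁻¹) x := by
      exact ((h1.const_mul _).add (((h2.const_mul _).mul_const t))).add
        ((h3.const_mul _).mul_const t⁻¹) |>.congr_deriv (by ring)
    convert h using 1
    have e1 : (s - 1 - 1) = s - 2 := by ring
    have e2 : (s + 1 - 1) = s := by ring
    rw [e1, e2]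
    have ex1 : x ^ (s - 1) = x ^ (s - 2) * x := by
      rw [show s - 1 = (s - 2) + 1 by ring, Real.rpow_add hx, Real.rpow_one]
    have ex2 : x ^ s = x ^ (s - 2) * x ^ 2 := by
      rw [show s = (s - 2) + 2 by ring, Real.rpow_add hx]
      norm_num [Real.rpow_natCast]
    simp only [hψ', ex1, ex2]
    field_simp
    ring
  have hnonneg : ∀ x : ℝ, 0 < x → 0 ≤ ψ' x := by
    intro x hx
    have h1 : 0 ≤ x ^ (s - 2) := (Real.rpow_pos_of_pos hx _).le
    have h2 : (0:ℝ) ≤ t⁻¹ := (inv_pos.mpr ht0).le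
    have h3 : 0 ≤ (t - x) ^ 2 := sq_nonneg _
    have h4 : 0 ≤ s * (s - 1) * (s + 1) / 2 := by
      nlinarith [mul_pos (mul_pos (show (0:ℝ) < s by linarith) (show (0:ℝ) < s - 1 by linarith))
        (show (0:ℝ) < s + 1 by linarith)]
    simp only [hψ']
    exact mul_nonneg (mul_nonneg (mul_nonneg h4 h1) h2) h3
  have hmono : MonotoneOn ψ (Set.Icc l k) :=
    monoIcc_aux (fun y hy => hderiv y (lt_of_lt_of_le hl hy.1))
      (fun y hy => hnonneg y (lt_of_lt_of_le hl hy.1.le))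
  exact hmono (left_mem_Icc.mpr hlk) (right_mem_Icc.mpr hlk) hlk

/-- For `s > 1` and `3 ≤ l < k`: `F_{s,l}(t) ≤ F_{s,k}(t)` for every `t ∈ ℝ`. -/
theorem stmt_10 (s l k : ℝ) (hs : 1 < s) (hl : 3 ≤ l) (hlk : l < k) :
    ∀ t : ℝ, Fsl s l t ≤ Fsl s k t := by
  intro t
  have hl0 : (0:ℝ) < l := by linarith
  unfold Fsl
  rcases le_or_gt |t| l with h | h
  · rw [if_pos h, if_pos (h.trans hlk.le)]
  · rw [if_neg (not_le.mpr h)]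
    rcases le_or_gt |t| k with h2 | h2
    · rw [if_pos h2]
      exact aux_tail_le s l hs hl0 h.le
    · rw [if_neg (not_le.mpr h2)]
      exact aux_tail_mono s hs hl0 hlk.le h2.le
end

section
/- For s > 1 and l ≥ 3, define g on [l,∞) by g(t) = t^s − (1−s²)l^s − ½s(s+1)l^{s−1}t − ½s(s−1)l^{s+1}t^{−1}. Then g(t) ≥ 0 for all t ∈ [l,∞); in particular, t^s ≥ (1−s²)l^s + ½s(s+1)l^{s−1}t + ½s(s−1)l^{s+1}t^{−1} for all t ≥ l. -/
open Real Set

private lemma bern_aux {p x : ℝ} (hp : 0 < p) (hx : 0 < x) (hx1 : x ≤ 1) :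
    1 + p * (1 - x) ≤ x ^ (-p) := by
  have hxp : 0 < x ^ p := Real.rpow_pos_of_pos hx p
  have hneg : x ^ (-p) = (x ^ p)⁻¹ := Real.rpow_neg hx.le p
  rcases le_or_gt 1 p with hp1 | hp1
  · -- Bernoulli with exponent ≥ 1 applied to 1/x
    have hσ : (0:ℝ) ≤ (1 - x) / x := div_nonneg (by linarith) hx.le
    have h := one_add_mul_self_le_rpow_one_add (by linarith : (-1:ℝ) ≤ (1-x)/x) hp1
    have he : (1 + (1 - x)/x) = x⁻¹ := by field_simp; ring
    rw [he] at h
    have he2 : (x⁻¹) ^ p = x ^ (-p) := by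
      rw [Real.inv_rpow hx.le, hneg]
    rw [he2] at h
    have : p * (1 - x) ≤ p * ((1 - x)/x) := by
      rw [div_eq_mul_inv]
      have h1x : (1:ℝ) ≤ x⁻¹ := by
        rw [le_inv_comm₀] <;> simp [hx, hx1]
      nlinarith [mul_nonneg (mul_nonneg hp.le (sub_nonneg.2 hx1)) (sub_nonneg.2 h1x)]
    linarith
  · -- 0 < p < 1 : use upper Bernoulli on x^p then invert
    have h := rpow_one_add_le_one_add_mul_self (by linarith : (-1:ℝ) ≤ x - 1) hp.le hp1.le
    have he : (1 + (x - 1)) = x := by ring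
    rw [he] at h
    -- h : x ^ p ≤ 1 + p * (x - 1)
    have hpos : 0 < 1 + p * (x - 1) := by nlinarith
    have hmul : (1 + p * (1 - x)) * (x ^ p) ≤ 1 := by nlinarith [sq_nonneg (p * (1 - x))]
    rw [hneg]
    have hinv := mul_inv_cancel₀ hxp.ne'
    nlinarith [inv_pos.2 hxp, mul_le_mul_of_nonneg_right hmul (inv_pos.2 hxp).le]

private lemma key_ineq {p l x : ℝ} (hp : 0 < p) (hl : 0 < l) (hlx : l ≤ x) :
    l ^ p * (x + p * (x - l)) ≤ x ^ p * x := by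
  have hx : 0 < x := lt_of_lt_of_le hl hlx
  have hq : (0:ℝ) < l / x := by positivity
  have hq1 : l / x ≤ 1 := by rw [div_le_one hx]; exact hlx
  have h := bern_aux hp hq hq1
  have he : (l / x) ^ (-p) = x ^ p / l ^ p := by
    rw [Real.rpow_neg (by positivity), Real.div_rpow hl.le hx.le]
    rw [inv_div]
  rw [he] at h
  have hlp : 0 < l ^ p := Real.rpow_pos_of_pos hl p
  have h2 := mul_le_mul_of_nonneg_left h (by positivity : (0:ℝ) ≤ l ^ p * x)
  have he2 : l ^ p * x * (x ^ p / l ^ p) = x ^ p * x := by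
    field_simp
  rw [he2] at h2
  calc l ^ p * (x + p * (x - l)) = l ^ p * x * (1 + p * (1 - l / x)) := by
        field_simp
    _ ≤ x ^ p * x := h2

/-- For `s > 1` and `l ≥ 3`, the function
`g(t) = t^s − (1−s²)l^s − ½s(s+1)l^{s−1}t − ½s(s−1)l^{s+1}t⁻¹` is nonnegative on `[l,∞)`;
in particular `t^s ≥ (1−s²)l^s + ½s(s+1)l^{s−1}t + ½s(s−1)l^{s+1}t⁻¹` for all `t ≥ l`. -/
theorem stmt_11 (s l : ℝ) (hs : 1 < s) (hl : 3 ≤ l) :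
    ∀ t : ℝ, l ≤ t →
      0 ≤ t ^ s - (1 - s ^ 2) * l ^ s - (s * (s + 1) / 2) * l ^ (s - 1) * t
            - (s * (s - 1) / 2) * l ^ (s + 1) * t⁻¹ ∧
      (1 - s ^ 2) * l ^ s + (s * (s + 1) / 2) * l ^ (s - 1) * t
            + (s * (s - 1) / 2) * l ^ (s + 1) * t⁻¹ ≤ t ^ s := by
  have hl0 : (0:ℝ) < l := by linarith
  set C1 : ℝ := (s * (s + 1) / 2) * l ^ (s - 1) with hC1
  set C2 : ℝ := (s * (s - 1) / 2) * l ^ (s + 1) with hC2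
  set g : ℝ → ℝ := fun t => t ^ s - (1 - s ^ 2) * l ^ s - C1 * t - C2 * t⁻¹ with hg
  -- derivative of g
  have hd : ∀ x : ℝ, 0 < x → HasDerivAt g (s * x ^ (s - 1) - C1 + C2 * (x ^ 2)⁻¹) x := by
    intro x hx
    have h1 : HasDerivAt (fun y : ℝ => y ^ s) (s * x ^ (s - 1)) x :=
      Real.hasDerivAt_rpow_const (Or.inl hx.ne')
    have h2 : HasDerivAt (fun y : ℝ => y⁻¹) (-(x ^ 2)⁻¹) x := hasDerivAt_inv hx.ne'
    have h3 : HasDerivAt (fun y : ℝ => C1 * y) C1 x := by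
      simpa using (hasDerivAt_id x).const_mul C1
    have h4 : HasDerivAt (fun y : ℝ => C2 * y⁻¹) (C2 * -(x ^ 2)⁻¹) x := h2.const_mul C2
    have := ((h1.sub_const ((1 - s ^ 2) * l ^ s)).sub h3).sub h4
    exact this.congr_deriv (by ring : s * x ^ (s - 1) - C1 - C2 * -(x ^ 2)⁻¹ = s * x ^ (s - 1) - C1 + C2 * (x ^ 2)⁻¹)
  -- the derivative is nonnegative on [l, ∞)
  have hderiv_nonneg : ∀ x : ℝ, l ≤ x → 0 ≤ s * x ^ (s - 1) - C1 + C2 * (x ^ 2)⁻¹ := by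
    intro x hx
    have hx0 : (0:ℝ) < x := lt_of_lt_of_le hl0 hx
    have hkey := key_ineq (p := s - 1) (by linarith) hl0 hx
    have hx2 : (0:ℝ) < x ^ 2 := by positivity
    have hL : (0:ℝ) < l ^ (s - 1) := Real.rpow_pos_of_pos hl0 _
    have hL2 : l ^ (s + 1) = l ^ (s - 1) * l ^ 2 := by
      rw [← Real.rpow_natCast l 2, ← Real.rpow_add hl0]
      congr 1
      push_cast; ring
    have key2 : 0 ≤ (s * x ^ (s - 1) - C1) * x ^ 2 + C2 := by
      rw [hC1, hC2, hL2]
      nlinarith [mul_le_mul_of_nonneg_left hkey (by positivity : (0:ℝ) ≤ s * x),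
        mul_nonneg (mul_nonneg (mul_nonneg (by linarith : (0:ℝ) ≤ s) hL.le)
          (by linarith : (0:ℝ) ≤ s - 1)) (sq_nonneg (x - l))]
    have heq : s * x ^ (s - 1) - C1 + C2 * (x ^ 2)⁻¹
        = ((s * x ^ (s - 1) - C1) * x ^ 2 + C2) / x ^ 2 := by
      field_simp
    rw [heq]
    exact div_nonneg key2 hx2.le
  -- monotone on [l, ∞)
  have hmono : MonotoneOn g (Ici l) := by
    apply monotoneOn_of_deriv_nonneg (convex_Ici l)
    · intro x hx
      exact (hd x (lt_of_lt_of_le hl0 hx)).continuousAt.continuousWithinAt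
    · intro x hx
      rw [interior_Ici] at hx
      exact ((hd x (lt_of_lt_of_le hl0 hx.le)).differentiableAt).differentiableWithinAt
    · intro x hx
      rw [interior_Ici] at hx
      rw [(hd x (lt_of_lt_of_le hl0 hx.le)).deriv]
      exact hderiv_nonneg x hx.le
  -- g l = 0
  have hgl : g l = 0 := by
    have e1 : l ^ (s - 1) * l = l ^ s := by
      rw [← Real.rpow_add_one hl0.ne']
      norm_num
    have e2 : l ^ (s + 1) * l⁻¹ = l ^ s := by
      rw [← Real.rpow_neg_one l, ← Real.rpow_add hl0]
      norm_num
    simp only [hg, hC1, hC2]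
    have : (s * (s + 1) / 2) * l ^ (s - 1) * l = (s * (s + 1) / 2) * l ^ s := by
      rw [mul_assoc, e1]
    have h2 : (s * (s - 1) / 2) * l ^ (s + 1) * l⁻¹ = (s * (s - 1) / 2) * l ^ s := by
      rw [mul_assoc, e2]
    rw [this, h2]; ring
  intro t ht
  have hgt : 0 ≤ g t := by
    have := hmono (self_mem_Ici) (mem_Ici.2 ht) ht
    linarith [hgl ▸ this]
  constructor
  · simpa [hg] using hgt
  · have := hgt
    simp only [hg] at this
    linarith
end
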